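/- arXiv:math/0004106 — 3 statements merged into one kernel-verified Lean document; each statement's English description precedes it below -/
import Mathlib

section
/- For r = 1, 2 let X_r be a Banach space with a shrinking Schauder basis (e_k^r) satisfying the (d_r, N_r, P_r, a) distortion property, where the same sequence a = (δ_i) satisfies lim_i δ_{i+1}/δ_i = 0. Write N_r = (n_k^r)_{k=1}^∞. Suppose that for every i_0 ∈ ℕ there exist i > j > i_0 with n_i^1 = n_j^2. Then X_1 and X_2 are totally incomparable. -/
open Filter Topology

open scoped Classical

noncomputable section

namespace Gasparis

/-! ## Schreier families and admissibility -/

/-- `E < F` for finite sets: every element of `E` is smaller than every element of `F`. -/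
def FinLt (E F : Finset ℕ) : Prop := ∀ i ∈ E, ∀ j ∈ F, i < j

/-- The Schreier families `S_n`. -/
def Schreier : ℕ → Set (Finset ℕ)
  | 0 => {F | F.card ≤ 1}
  | n + 1 => {F | F = ∅ ∨ ∃ (k : ℕ) (G : ℕ → Finset ℕ), 0 < k ∧
      (∀ i < k, G i ∈ Schreier n ∧ (G i).Nonempty) ∧
      (∀ i j, i < j → j < k → FinLt (G i) (G j)) ∧
      (∀ j ∈ G 0, k ≤ j) ∧
      F = (Finset.range k).biUnion G}

/-- Minimum of a finite set of naturals (junk value `0` for `∅`). -/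
def minF (I : Finset ℕ) : ℕ := sInf (I : Set ℕ)

/-- Minimum of the support of a finitely supported sequence. -/
def minSupp (f : ℕ →₀ ℝ) : ℕ := minF f.support

/-- `I 0 < I 1 < ⋯ < I (k-1)` is an `S_n`-admissible collection. -/
def Admissible (n k : ℕ) (I : ℕ → Finset ℕ) : Prop :=
  (∀ i < k, (I i).Nonempty) ∧
  (∀ i j, i < j → j < k → FinLt (I i) (I j)) ∧
  ((Finset.range k).image fun i => minF (I i)) ∈ Schreier n

/-- An (unordered) family of finite sets is `S_n`-admissible. -/
def FamAdmissible (n : ℕ) (𝓕 : Finset (Finset ℕ)) : Prop :=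
  (∀ I ∈ 𝓕, I.Nonempty) ∧
  (∀ I ∈ 𝓕, ∀ J ∈ 𝓕, I ≠ J → FinLt I J ∨ FinLt J I) ∧
  𝓕.image minF ∈ Schreier n

/-- `F` is a maximal (under inclusion) member of `S_n`. -/
def MaximalSchreier (n : ℕ) (F : Finset ℕ) : Prop :=
  F ∈ Schreier n ∧ ∀ G ∈ Schreier n, F ⊆ G → G = F

/-! ## The Schreier and conditional Schreier norms on `c₀₀ = ℕ →₀ ℝ` -/

/-- The `n`-th Schreier norm on `c₀₀`. -/
def schreierNorm (n : ℕ) (x : ℕ →₀ ℝ) : ℝ :=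
  sSup {r : ℝ | ∃ F ∈ Schreier n, r = ∑ i ∈ F, |x i|}

/-- The `n`-th conditional Schreier norm on `c₀₀`. -/
def cschreierNorm (n : ℕ) (x : ℕ →₀ ℝ) : ℝ :=
  sSup {r : ℝ | ∃ (k : ℕ) (J : ℕ → Finset ℕ),
    (∀ i < k, ∃ a b : ℕ, J i = Finset.Icc a b) ∧ Admissible n k J ∧
    r = ∑ i ∈ Finset.range k, |∑ p ∈ J i, x p|}

/-! ## Block sequences, described by their coefficients -/

/-- A block basis, given by the (finitely supported) coefficient sequences of its vectors:
successive nonempty supports. -/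
def IsBlockSeq (u : ℕ → ℕ →₀ ℝ) : Prop :=
  (∀ k, u k ≠ 0) ∧ ∀ k, ∀ i ∈ (u k).support, ∀ j ∈ (u (k + 1)).support, i < j

/-- `v` is a block basis of the block basis `u`. -/
def IsBlockSeqOf (v u : ℕ → ℕ →₀ ℝ) : Prop :=
  IsBlockSeq v ∧ ∃ d : ℕ → ℕ →₀ ℝ, IsBlockSeq d ∧
    ∀ k, v k = (d k).sum fun i a => a • u i

/-- The vector of `X` with coefficients `f` with respect to the sequence `e`. -/
def vecIn {X : Type*} [AddCommGroup X] [Module ℝ X] (e : ℕ → X) (f : ℕ →₀ ℝ) : X :=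
  f.sum fun i a => a • e i

/-! ## Schauder bases -/

/-- A Schauder basis of a Banach space, bundled with its biorthogonal functionals. -/
structure SchauderBasis (X : Type*) [NormedAddCommGroup X] [NormedSpace ℝ X] where
  e : ℕ → X
  coord : ℕ → X →L[ℝ] ℝ
  biorth : ∀ i j, coord i (e j) = if i = j then (1 : ℝ) else 0
  expand : ∀ x : X, Tendsto (fun k => ∑ i ∈ Finset.range k, coord i x • e i) atTop (𝓝 x)

variable {X : Type*}

def NormalizedBasis [NormedAddCommGroup X] [NormedSpace ℝ X] (b : SchauderBasis X) : Prop :=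
  ∀ i, ‖b.e i‖ = 1

/-- Every projection onto an interval of coordinates has norm at most `1`. -/
def Bimonotone [NormedAddCommGroup X] [NormedSpace ℝ X] (b : SchauderBasis X) : Prop :=
  ∀ (x : X) (a c : ℕ), ‖∑ i ∈ Finset.Icc a c, b.coord i x • b.e i‖ ≤ ‖x‖

/-- The biorthogonal functionals form a basis of the dual: the expansion of every
continuous functional converges to it. -/
def Shrinking [NormedAddCommGroup X] [NormedSpace ℝ X] (b : SchauderBasis X) : Prop :=
  ∀ f : X →L[ℝ] ℝ,
    Tendsto (fun k => ‖f - ∑ i ∈ Finset.range k, f (b.e i) • b.coord i‖) atTop (𝓝 (0 : ℝ))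

def BoundedlyComplete [NormedAddCommGroup X] [NormedSpace ℝ X] (b : SchauderBasis X) : Prop :=
  ∀ a : ℕ → ℝ, (∃ C : ℝ, ∀ k, ‖∑ i ∈ Finset.range k, a i • b.e i‖ ≤ C) →
    ∃ x : X, Tendsto (fun k => ∑ i ∈ Finset.range k, a i • b.e i) atTop (𝓝 x)

/-- `1`-unconditionality: changing signs of coefficients does not increase the norm. -/
def OneUnconditional [NormedAddCommGroup X] [NormedSpace ℝ X] (b : SchauderBasis X) : Prop :=
  ∀ (a ε : ℕ → ℝ) (F : Finset ℕ), (∀ i, ε i = 1 ∨ ε i = -1) →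
    ‖∑ i ∈ F, (ε i * a i) • b.e i‖ ≤ ‖∑ i ∈ F, a i • b.e i‖

/-! ## Spreading models, asymptotic `ℓ¹` and the distortion property -/

/-- `(x_n)` is an `ε`-`ℓ¹ⁿ` spreading model. -/
def SpreadingModelL1 [NormedAddCommGroup X] [NormedSpace ℝ X]
    (x : ℕ → X) (ε : ℝ) (n : ℕ) : Prop :=
  ∀ F ∈ Schreier n, ∀ a : ℕ → ℝ, ε * ∑ i ∈ F, |a i| ≤ ‖∑ i ∈ F, a i • x i‖

/-- Every normalized block basis of `(e_n)` is an `ε`-`ℓ¹ⁿ` spreading model. -/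
def AsymptoticL1 [NormedAddCommGroup X] [NormedSpace ℝ X]
    (b : SchauderBasis X) (ε : ℝ) (n : ℕ) : Prop :=
  ∀ u : ℕ → ℕ →₀ ℝ, IsBlockSeq u → (∀ k, ‖vecIn b.e (u k)‖ = 1) →
    SpreadingModelL1 (fun k => vecIn b.e (u k)) ε n

/-- The modulus `τ(U, δ) ∈ ℕ∞` of the block subspace `U` generated by the block basis `u`. -/
def tau [NormedAddCommGroup X] [NormedSpace ℝ X]
    (e : ℕ → X) (u : ℕ → ℕ →₀ ℝ) (δ : ℝ) : ℕ∞ :=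
  sSup {z : ℕ∞ | ∃ ζ : ℕ, z = (ζ : ℕ∞) ∧
    ∀ v : ℕ → ℕ →₀ ℝ, IsBlockSeqOf v u → (∀ k, ‖vecIn e (v k)‖ = 1) →
      ∃ φ : ℕ → ℕ, StrictMono φ ∧ SpreadingModelL1 (fun k => vecIn e (v (φ k))) δ ζ}

/-- The `(d, N, P, a)` distortion property (with the standing assumptions on `d, N, P, a`). -/
structure DistortionProperty [NormedAddCommGroup X] [NormedSpace ℝ X]
    (b : SchauderBasis X) (d : ℝ) (N P : ℕ → ℕ) (δ : ℕ → ℝ) : Prop where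
  one_lt_d : 1 < d
  N_mono : StrictMono N
  P_mono : StrictMono P
  N_le_P : ∀ i, (if i = 0 then 1 else N (i - 1)) ≤ P i
  P_lt_N : ∀ i, 2 * P i < N i
  δ_pos : ∀ i, 0 < δ i
  δ_anti : ∀ i, δ (i + 1) ≤ δ i
  δ_null : Tendsto δ atTop (𝓝 (0 : ℝ))
  asymptotic : ∀ j, AsymptoticL1 b (δ j) (N j)
  tau_lt : ∀ j, ∀ u : ℕ → ℕ →₀ ℝ, IsBlockSeq u → tau b.e u (d * δ j) < (P j : ℕ∞)

/-! ## Subspaces, hereditary indecomposability, total incomparability, distortion -/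

/-- An (infinite-dimensional, closed) subspace of a Banach space. -/
def IsBanachSubspace [NormedAddCommGroup X] [NormedSpace ℝ X] (Y : Submodule ℝ X) : Prop :=
  IsClosed (Y : Set X) ∧ ¬ FiniteDimensional ℝ Y

/-- Hereditarily indecomposable. -/
def HI (X : Type*) [NormedAddCommGroup X] [NormedSpace ℝ X] : Prop :=
  ∀ Y Z : Submodule ℝ X, IsBanachSubspace Y → IsBanachSubspace Z → Y ⊓ Z = ⊥ →
    ¬ IsClosed ((Y ⊔ Z : Submodule ℝ X) : Set X)

/-- No subspace of `X` is isomorphic to a subspace of `Y`. -/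
def TotallyIncomparable (X Y : Type*) [NormedAddCommGroup X] [NormedSpace ℝ X]
    [NormedAddCommGroup Y] [NormedSpace ℝ Y] : Prop :=
  ∀ (U : Submodule ℝ X) (V : Submodule ℝ Y), IsBanachSubspace U → IsBanachSubspace V →
    IsEmpty (U ≃L[ℝ] V)

/-- An equivalent norm on `X`. -/
structure IsEquivNorm [NormedAddCommGroup X] [NormedSpace ℝ X] (Nn : X → ℝ) : Prop where
  add_le : ∀ x y : X, Nn (x + y) ≤ Nn x + Nn y
  smul_eq : ∀ (a : ℝ) (x : X), Nn (a • x) = |a| * Nn x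
  lower : ∃ c : ℝ, 0 < c ∧ ∀ x : X, c * ‖x‖ ≤ Nn x
  upper : ∃ C : ℝ, 0 < C ∧ ∀ x : X, Nn x ≤ C * ‖x‖

def ArbitrarilyDistortable (X : Type*) [NormedAddCommGroup X] [NormedSpace ℝ X] : Prop :=
  ∀ lam : ℝ, 1 < lam → ∃ Nn : X → ℝ, IsEquivNorm Nn ∧
    ∀ Y : Submodule ℝ X, IsBanachSubspace Y →
      ∃ x ∈ Y, ∃ y ∈ Y, x ≠ 0 ∧ y ≠ 0 ∧ ‖x‖ = ‖y‖ ∧ lam < Nn x / Nn y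

/-- Reflexivity: the canonical embedding into the double dual is surjective. -/
def IsReflexiveSpace (X : Type*) [NormedAddCommGroup X] [NormedSpace ℝ X] : Prop :=
  Function.Surjective (NormedSpace.inclusionInDoubleDual ℝ X)

/-- A bundled (real, infinite-dimensional or not) Banach space. -/
structure BanachSpaceB where
  carrier : Type
  [grp : NormedAddCommGroup carrier]
  [mod : NormedSpace ℝ carrier]
  [comp : CompleteSpace carrier]

attribute [instance] BanachSpaceB.grp BanachSpaceB.mod BanachSpaceB.comp

/-! ## `M`-good sequences -/

/-- The sequence `f_j^N` (0-indexed: `fN m n j` is the paper's `f_{j+1}^N`). -/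
def fN (m n : ℕ → ℕ) : ℕ → ℕ
  | 0 => 1
  | j + 1 => sSup {s : ℕ | ∃ ρ : ℕ → ℕ,
      (∏ i ∈ Finset.range (j + 1), m i ^ ρ i) < m (j + 1) ^ 3 ∧
      s = ∑ i ∈ Finset.range (j + 1), ρ i * n i}

/-- Standing assumptions on the fixed sequences `M = (m_i)` and `L = (l_i)`. -/
structure MLParams (m l : ℕ → ℕ) : Prop where
  m_mono : StrictMono m
  m_six : 6 < m 0
  m_sq : ∀ i, m i ^ 2 < m (i + 1)
  l_mono : StrictMono l
  l_four : 4 < l 0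
  l_exp : ∀ i, m i < 2 ^ l i

/-- `N = (n_i)` (an infinite subset of `ℕ`, given by its increasing enumeration)
is `M`-good: `l_j (f_j^N + 1) < n_j` for all `j`. -/
def MGoodSeq (m l n : ℕ → ℕ) : Prop :=
  StrictMono n ∧ ∀ j, l j * (fN m n j + 1) < n j

/-! ## Appropriate trees -/

/-- A node of a tree: a nonempty list of triples `(m-entry, interval, sign)`. -/
abbrev GNode := List (ℕ × Finset ℕ × ℤ)

def mEnt (α : GNode) : ℕ := (α.getLastD (0, ∅, 1)).1
def iEnt (α : GNode) : Finset ℕ := (α.getLastD (0, ∅, 1)).2.1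
def sEnt (α : GNode) : ℤ := (α.getLastD (0, ∅, 1)).2.2

/-- `α` is a terminal node of the tree `T`. -/
def IsTerminalIn (T : Finset GNode) (α : GNode) : Prop :=
  ∀ β ∈ T, α <+: β → β = α

/-- The immediate successors of `α` in `T`. -/
def childrenIn (T : Finset GNode) (α : GNode) : Finset GNode :=
  T.filter fun β => β.length = α.length + 1 ∧ α <+: β

/-- Appropriate trees (with respect to the data `M = (m_i)`, `N = (n_i)`). -/
def IsAppropriate (m n : ℕ → ℕ) (T : Finset GNode) : Prop :=
  T.Nonempty ∧
  (∀ α ∈ T, α ≠ []) ∧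
  (∀ α ∈ T, ∀ k, 0 < k → k ≤ α.length → α.take k ∈ T) ∧
  (∀ α ∈ T, ∀ β ∈ T, α.length = 1 → β.length = 1 → α = β) ∧
  (∀ α ∈ T, ∀ t ∈ α, ((t : ℕ × Finset ℕ × ℤ).2.2 = 1 ∨ t.2.2 = -1) ∧ t.2.1.Nonempty) ∧
  (∀ α ∈ T, IsTerminalIn T α → mEnt α = 0 ∧ ∃ p : ℕ, iEnt α = {p}) ∧
  (∀ α ∈ T, ¬ IsTerminalIn T α → ∃ j : ℕ, mEnt α = m j ∧
    FamAdmissible (n j) ((childrenIn T α).image iEnt) ∧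
    iEnt α = (childrenIn T α).sup iEnt)

/-- The family `𝒢` of appropriate trees. -/
def 𝒢 (m n : ℕ → ℕ) : Set (Finset GNode) := {T | IsAppropriate m n T}

/-- The root of a tree. -/
def rootOf (T : Finset GNode) : GNode :=
  if h : (T.filter fun α => α.length = 1).Nonempty then h.choose else []

/-- `m(α)`: product of the `M`-entries of the predecessor of `α`. -/
def mWeight (α : GNode) : ℕ := (α.dropLast.map fun t => t.1).prod

/-- `ε(α)`: product of the signs of the proper predecessors of `α`. -/
def epsProd (α : GNode) : ℤ := (α.dropLast.map fun t => t.2.2).prod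

/-- `n(α)`: sum of the `n_i` over the `M`-entries `m_i` of the predecessor of `α`. -/
def nVal (m n : ℕ → ℕ) (α : GNode) : ℕ :=
  (α.dropLast.map fun t => n (sInf {j | m j = t.1})).sum

/-- The point `p_α` of a terminal node. -/
def pOf (α : GNode) : ℕ := minF (iEnt α)

/-- The measure `mu_𝒯` associated to a tree. -/
def treeMeasure (T : Finset GNode) : ℕ →₀ ℝ :=
  ∑ α ∈ T.filter (fun α => IsTerminalIn T α),
    ((mWeight α : ℝ)⁻¹ * ((epsProd α * sEnt α : ℤ) : ℝ)) • Finsupp.single (pOf α) (1 : ℝ)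

/-- The weight `w(𝒯)`. -/
def treeWeight (T : Finset GNode) : ℕ :=
  if T.card = 1 then 1 else mEnt (rootOf T)

/-- Action of a finitely supported measure on an element of `c₀₀`. -/
def mpair (mu x : ℕ →₀ ℝ) : ℝ := mu.sum fun i c => c * x i

/-- The norming set `𝓜 = {mu_𝒯 : 𝒯 ∈ 𝒢}`. -/
def normingSetOf (m n : ℕ → ℕ) : Set (ℕ →₀ ℝ) :=
  {mu | ∃ T ∈ 𝒢 m n, mu = treeMeasure T}

/-- The norm of `X_𝓜` on `c₀₀`. -/
def mNorm (m n : ℕ → ℕ) (x : ℕ →₀ ℝ) : ℝ :=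
  sSup {r : ℝ | ∃ mu ∈ normingSetOf m n, r = mpair mu x}

/-- A family of trees is `S_k`-admissible if the family of root intervals is. -/
def TreeFamAdmissible (k : ℕ) (G₀ : Finset (Finset GNode)) : Prop :=
  FamAdmissible k (G₀.image fun T => iEnt (rootOf T))

/-! ## The repeated averages hierarchy -/

/-- Auxiliary step for the repeated averages hierarchy. -/
def ravgS (f : Set ℕ → ℕ → (ℕ →₀ ℝ)) (R : Set ℕ) : ℕ → (ℕ →₀ ℝ)
  | 0 => ((sInf R : ℕ) : ℝ)⁻¹ • ∑ i ∈ Finset.range (sInf R), f R i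
  | k + 1 =>
    let R' : Set ℕ := {r ∈ R | ∀ j ∈ (ravgS f R k).support, j < r}
    ((sInf R' : ℕ) : ℝ)⁻¹ • ∑ i ∈ Finset.range (sInf R'), f R' i

/-- The repeated averages hierarchy `ξ_k^R` (`k` 0-indexed). -/
def ravg : ℕ → Set ℕ → ℕ → (ℕ →₀ ℝ)
  | 0 => fun R k => Finsupp.single (Nat.nth (· ∈ R) k) 1
  | ξ + 1 => ravgS (ravg ξ)

/-- `‖mu‖_k = sup{mu(F) : F ∈ S_k}`. -/
def measNorm (k : ℕ) (mu : ℕ →₀ ℝ) : ℝ :=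
  sSup {r : ℝ | ∃ F ∈ Schreier k, r = ∑ i ∈ F, mu i}

/-- The sequence of minima of supports of a block basis. -/
def pSeq (u : ℕ → ℕ →₀ ℝ) (k : ℕ) : ℕ := minSupp (u k)

/-- `v` is a generic `(ε, ξ)` average of the block basis `u`. -/
def IsGenericAvg (u : ℕ → ℕ →₀ ℝ) (ε : ℝ) (ξ : ℕ) (v : ℕ →₀ ℝ) : Prop :=
  ∃ R : Set ℕ, R.Infinite ∧ R ⊆ Set.range (pSeq u) ∧
    measNorm (ξ - 1) (ravg ξ R 0) < ε ∧
    v = (ravg ξ R 0).sum fun q c => c • u (sInf {k | pSeq u k = q})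

/-- `v` is an `(ε, ξ)` average of `u`: a generic `(ε, ξ)` average of a normalized
(w.r.t. the norm `nrm`) block basis of `u`. -/
def IsAvg (nrm : (ℕ →₀ ℝ) → ℝ) (u : ℕ → ℕ →₀ ℝ) (ε : ℝ) (ξ : ℕ) (v : ℕ →₀ ℝ) : Prop :=
  ∃ w : ℕ → ℕ →₀ ℝ, IsBlockSeqOf w u ∧ (∀ k, nrm (w k) = 1) ∧ IsGenericAvg w ε ξ v

/-- `x` is a smoothly normalized `(ε, ξ)` average of `u`. -/
def IsSmoothNormAvg (nrm : (ℕ →₀ ℝ) → ℝ) (u : ℕ → ℕ →₀ ℝ) (ε : ℝ) (ξ : ℕ)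
    (x : ℕ →₀ ℝ) : Prop :=
  ∃ v : ℕ →₀ ℝ, IsAvg nrm u ε ξ v ∧ (1 : ℝ) / 2 ≤ nrm v ∧ x = (nrm v)⁻¹ • v

/-! ## Infinite subsets of `ℕ` as points of the Cantor space -/

/-- The increasing enumeration of the set coded by `S : ℕ → Bool` (1st element = index 0). -/
def enumOf (S : ℕ → Bool) : ℕ → ℕ := Nat.nth fun i => S i = true

/-- The set coded by `S` is `M`-good. -/
def MGoodB (m l : ℕ → ℕ) (S : ℕ → Bool) : Prop := MGoodSeq m l (enumOf S)

/-- The infinite subsets of the set coded by `N₀`, as a topological (sub)space of the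
Cantor space `ℕ → Bool` with the product (pointwise convergence) topology. -/
def SubsetsOf (N₀ : ℕ → Bool) : Type :=
  {S : ℕ → Bool // {i | S i = true}.Infinite ∧ ∀ i, S i = true → N₀ i = true}

instance (N₀ : ℕ → Bool) : TopologicalSpace (SubsetsOf N₀) :=
  instTopologicalSpaceSubtype



/-! ## Auxiliary lemmas for Statement 3 -/

section Aux3

variable {X : Type*} [NormedAddCommGroup X] [NormedSpace ℝ X]

theorem vecIn_sum_support (e : ℕ → X) (f : ℕ →₀ ℝ) :
    vecIn e f = ∑ i ∈ f.support, f i • e i := rfl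

theorem vecIn_smul (e : ℕ → X) (c : ℝ) (f : ℕ →₀ ℝ) :
    vecIn e (c • f) = c • vecIn e f := by
  have : ∀ g : ℕ →₀ ℝ, vecIn e g = Finsupp.linearCombination ℝ e g := by
    intro g; rw [Finsupp.linearCombination_apply]; rfl
  rw [this, this, map_smul]

theorem vecIn_zero (e : ℕ → X) : vecIn e (0 : ℕ →₀ ℝ) = 0 := by
  simp [vecIn]

theorem coord_vecIn (b : SchauderBasis X) (f : ℕ →₀ ℝ) (l : ℕ) :
    b.coord l (vecIn b.e f) = f l := by
  rw [vecIn_sum_support, map_sum]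
  have h1 : ∀ i ∈ f.support, b.coord l (f i • b.e i) = if i = l then f i else 0 := by
    intro i _
    rw [map_smul, b.biorth l i]
    by_cases h : i = l
    · simp [h]
    · simp only [if_neg h, smul_eq_mul]
      rw [if_neg (fun hh => h hh.symm), mul_zero]
  rw [Finset.sum_congr rfl h1, Finset.sum_ite_eq' f.support l (fun i => f i)]
  by_cases h : l ∈ f.support
  · simp [h]
  · simp [h, Finsupp.notMem_support_iff.mp h]

theorem exists_projBound (b : SchauderBasis X) [CompleteSpace X] :
    ∃ K : ℝ, 1 ≤ K ∧ ∀ (x : X) (a c : ℕ),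
      ‖∑ l ∈ Finset.Icc a c, b.coord l x • b.e l‖ ≤ K * ‖x‖ := by
  set P : ℕ → X →L[ℝ] X := fun n => ∑ i ∈ Finset.range n, (b.coord i).smulRight (b.e i)
    with hP
  have hPapp : ∀ n x, P n x = ∑ i ∈ Finset.range n, b.coord i x • b.e i := by
    intro n x
    simp [hP, ContinuousLinearMap.sum_apply, ContinuousLinearMap.smulRight_apply]
  have hbdd : ∀ x : X, ∃ C, ∀ n, ‖P n x‖ ≤ C := by
    intro x
    have h1 : Tendsto (fun n => P n x) atTop (𝓝 x) := by
      have := b.expand x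
      refine this.congr fun n => ?_
      rw [hPapp]
    obtain ⟨C, hC⟩ := (h1.norm).bddAbove_range
    exact ⟨C, fun n => hC ⟨n, rfl⟩⟩
  obtain ⟨C', hC'⟩ := banach_steinhaus hbdd
  have hC'0 : 0 ≤ C' := le_trans (norm_nonneg _) (hC' 0)
  refine ⟨max 1 (2 * C'), le_max_left _ _, ?_⟩
  intro x a c
  by_cases hac : a ≤ c
  · have key : ∑ l ∈ Finset.Icc a c, b.coord l x • b.e l = P (c+1) x - P a x := by
      rw [hPapp, hPapp, ← Finset.sum_Ico_eq_sub (fun l => b.coord l x • b.e l) (by omega),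
        Finset.Ico_add_one_right_eq_Icc]
    rw [key]
    have h1 : ‖P (c+1) x‖ ≤ C' * ‖x‖ :=
      le_trans ((P (c+1)).le_opNorm x) (mul_le_mul_of_nonneg_right (hC' _) (norm_nonneg x))
    have h2 : ‖P a x‖ ≤ C' * ‖x‖ :=
      le_trans ((P a).le_opNorm x) (mul_le_mul_of_nonneg_right (hC' _) (norm_nonneg x))
    have h3 : ‖P (c+1) x - P a x‖ ≤ 2 * C' * ‖x‖ := by
      calc ‖P (c+1) x - P a x‖ ≤ ‖P (c+1) x‖ + ‖P a x‖ := norm_sub_le _ _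
      _ ≤ 2 * C' * ‖x‖ := by linarith
    exact le_trans h3 (mul_le_mul_of_nonneg_right (le_max_right _ _) (norm_nonneg x))
  · rw [Finset.Icc_eq_empty (by omega)]
    simp only [Finset.sum_empty, norm_zero]
    have : (0:ℝ) ≤ 1 * ‖x‖ := by positivity
    exact le_trans this (mul_le_mul_of_nonneg_right (le_max_left _ _) (norm_nonneg x))

theorem geom_range_eq (n : ℕ) :
    ∑ i ∈ Finset.range n, ((2:ℝ)⁻¹)^(i+1) = 1 - ((2:ℝ)⁻¹)^n := by
  induction n with
  | zero => simp
  | succ n ih =>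
    rw [Finset.sum_range_succ, ih]
    ring

theorem geom_finset_le_one (s : Finset ℕ) : ∑ i ∈ s, ((2:ℝ)⁻¹)^(i+1) ≤ 1 := by
  obtain ⟨n, hn⟩ := s.exists_nat_subset_range
  have h1 : ∑ i ∈ s, ((2:ℝ)⁻¹)^(i+1) ≤ ∑ i ∈ Finset.range n, ((2:ℝ)⁻¹)^(i+1) :=
    Finset.sum_le_sum_of_subset_of_nonneg hn (fun i _ _ => by positivity)
  rw [geom_range_eq] at h1
  have h2 : (0:ℝ) ≤ ((2:ℝ)⁻¹)^n := by positivity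
  linarith

theorem coeff_bound (b : SchauderBasis X) {K : ℝ} (hK1 : 1 ≤ K)
    (hK : ∀ (x : X) (a c : ℕ), ‖∑ l ∈ Finset.Icc a c, b.coord l x • b.e l‖ ≤ K * ‖x‖)
    (ν : ℕ → ℕ) (hν : Monotone ν)
    (f : ℕ → ℕ →₀ ℝ) (hf : ∀ k, (f k).support ⊆ Finset.Ioc (ν k) (ν (k+1)))
    (D : ℕ →₀ ℝ) (v : ℕ →₀ ℝ) (hv : v = D.sum fun i a => a • f i)
    (i₀ : ℕ) :
    |D i₀| * ‖vecIn b.e (f i₀)‖ ≤ K * ‖vecIn b.e v‖ := by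
  have hIcc : Finset.Icc (ν i₀ + 1) (ν (i₀+1)) = Finset.Ioc (ν i₀) (ν (i₀+1)) := by
    ext l; simp [Finset.mem_Icc, Finset.mem_Ioc]
  -- value of v on the interval
  have hvl : ∀ l ∈ Finset.Ioc (ν i₀) (ν (i₀+1)), v l = D i₀ * (f i₀ l) := by
    intro l hl
    rw [Finset.mem_Ioc] at hl
    rw [hv, Finsupp.sum_apply]
    rw [Finsupp.sum]
    have hz : ∀ i ∈ D.support, i ≠ i₀ → (D i • f i) l = 0 := by
      intro i _ hne
      rw [Finsupp.smul_apply, smul_eq_mul]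
      have hfi : f i l = 0 := by
        by_contra hcon
        have hmem : l ∈ (f i).support := Finsupp.mem_support_iff.mpr hcon
        have := hf i hmem
        rw [Finset.mem_Ioc] at this
        rcases Nat.lt_or_ge i i₀ with hlt | hge
        · have : ν (i+1) ≤ ν i₀ := hν (by omega)
          omega
        · have hgt : i₀ < i := by omega
          have : ν (i₀+1) ≤ ν i := hν (by omega)
          omega
      rw [hfi, mul_zero]
    by_cases hmem : i₀ ∈ D.support
    · rw [Finset.sum_eq_single_of_mem i₀ hmem hz]
      rw [Finsupp.smul_apply, smul_eq_mul]
    · have hD0 : D i₀ = 0 := Finsupp.notMem_support_iff.mp hmem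
      rw [hD0, zero_mul]
      apply Finset.sum_eq_zero
      intro i hi
      exact hz i hi (fun h => hmem (h ▸ hi))
  -- the interval projection of `vec v` recovers `D i₀ • vec (f i₀)`
  have key : ∑ l ∈ Finset.Ioc (ν i₀) (ν (i₀+1)), b.coord l (vecIn b.e v) • b.e l
      = D i₀ • vecIn b.e (f i₀) := by
    have h1 : ∀ l ∈ Finset.Ioc (ν i₀) (ν (i₀+1)),
        b.coord l (vecIn b.e v) • b.e l = (D i₀ * f i₀ l) • b.e l := by
      intro l hl
      rw [coord_vecIn, hvl l hl]
    rw [Finset.sum_congr rfl h1]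
    have h2 : vecIn b.e (f i₀) = ∑ l ∈ Finset.Ioc (ν i₀) (ν (i₀+1)), f i₀ l • b.e l :=
      Finsupp.sum_of_support_subset _ (hf i₀) _ (fun i _ => zero_smul ℝ _)
    rw [h2, Finset.smul_sum]
    refine Finset.sum_congr rfl fun l _ => ?_
    rw [smul_smul]
  have hnorm : |D i₀| * ‖vecIn b.e (f i₀)‖ = ‖D i₀ • vecIn b.e (f i₀)‖ := by
    rw [norm_smul, Real.norm_eq_abs]
  rw [hnorm, ← key, ← hIcc]
  exact hK _ _ _

end Aux3


section Aux3b

variable {X : Type*} [NormedAddCommGroup X] [NormedSpace ℝ X]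

theorem vecIn_eq_lc (e : ℕ → X) (f : ℕ →₀ ℝ) :
    vecIn e f = Finsupp.linearCombination ℝ e f := by
  rw [Finsupp.linearCombination_apply]; rfl

theorem vecIn_sum_single (e : ℕ → X) (s : Finset ℕ) (c : ℕ → ℝ) :
    vecIn e (∑ i ∈ s, Finsupp.single i (c i)) = ∑ i ∈ s, c i • e i := by
  rw [vecIn_eq_lc, map_sum]
  exact Finset.sum_congr rfl fun i _ => Finsupp.linearCombination_single ℝ (c i) i

theorem truncate (b : SchauderBasis X) (y : X) (n : ℕ)
    (hcoord : ∀ i ≤ n, b.coord i y = 0) {η : ℝ} (hη : 0 < η) :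
    ∃ (h : ℕ →₀ ℝ) (m : ℕ), n < m ∧ h.support ⊆ Finset.Ioc n m ∧
      ‖vecIn b.e h - y‖ ≤ η := by
  obtain ⟨N, hN⟩ := (Metric.tendsto_atTop).mp (b.expand y) η hη
  refine ⟨∑ i ∈ Finset.range (max N (n+1)), Finsupp.single i (b.coord i y),
    max N (n+1), by omega, ?_, ?_⟩
  · intro l hl
    rw [Finsupp.mem_support_iff] at hl
    have happ : (∑ i ∈ Finset.range (max N (n+1)), Finsupp.single i (b.coord i y)) l
        = if l ∈ Finset.range (max N (n+1)) then b.coord l y else 0 := by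
      rw [Finset.sum_apply']
      rw [← Finset.sum_ite_eq' (Finset.range (max N (n+1))) l (fun i => b.coord i y)]
      exact Finset.sum_congr rfl fun i _ => Finsupp.single_apply
    rw [happ] at hl
    by_cases h1 : l ∈ Finset.range (max N (n+1))
    · rw [if_pos h1] at hl
      rw [Finset.mem_range] at h1
      rw [Finset.mem_Ioc]
      constructor
      · by_contra hc
        exact hl (hcoord l (by omega))
      · omega
    · rw [if_neg h1] at hl
      exact absurd rfl hl
  · rw [vecIn_sum_single]
    have := hN (max N (n+1)) (le_max_left _ _)
    rw [dist_eq_norm] at this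
    exact le_of_lt this

end Aux3b

section Glide3

variable {X₁ X₂ : Type*} [NormedAddCommGroup X₁] [NormedSpace ℝ X₁]
  [NormedAddCommGroup X₂] [NormedSpace ℝ X₂]

theorem exists_unit_vanishing (b₁ : SchauderBasis X₁) (b₂ : SchauderBasis X₂)
    (U : Submodule ℝ X₁) (hU : ¬ FiniteDimensional ℝ U) (Tc : U →L[ℝ] X₂) (n₁ n₂ : ℕ) :
    ∃ x : U, ‖(x : X₁)‖ = 1 ∧ (∀ i ≤ n₁, b₁.coord i (x : X₁) = 0) ∧
      (∀ i ≤ n₂, b₂.coord i (Tc x) = 0) := by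
  set Φ : U →ₗ[ℝ] ((Fin (n₁+1) → ℝ) × (Fin (n₂+1) → ℝ)) :=
    LinearMap.prod
      (LinearMap.pi fun i : Fin (n₁+1) => ((b₁.coord (i : ℕ)).toLinearMap).comp U.subtype)
      (LinearMap.pi fun i : Fin (n₂+1) =>
        ((b₂.coord (i : ℕ)).toLinearMap).comp (Tc : U →ₗ[ℝ] X₂)) with hΦ
  have hker : ∃ x₀ : U, x₀ ≠ 0 ∧ Φ x₀ = 0 := by
    by_contra hc
    push_neg at hc
    have hinj : Function.Injective Φ := by
      rw [← LinearMap.ker_eq_bot, LinearMap.ker_eq_bot']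
      intro x hx
      by_contra hx0
      exact (hc x hx0) hx
    exact hU (FiniteDimensional.of_injective Φ hinj)
  obtain ⟨x₀, hx0, hΦ0⟩ := hker
  rw [hΦ] at hΦ0
  simp only [LinearMap.prod_apply, Pi.prod, Function.prod_apply, Prod.mk_eq_zero] at hΦ0
  have h1 : ∀ i : Fin (n₁+1), b₁.coord (i : ℕ) (x₀ : X₁) = 0 := by
    intro i
    have := congrFun hΦ0.1 i
    simpa [LinearMap.pi_apply] using this
  have h2 : ∀ i : Fin (n₂+1), b₂.coord (i : ℕ) (Tc x₀) = 0 := by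
    intro i
    have := congrFun hΦ0.2 i
    simpa [LinearMap.pi_apply] using this
  have hx0' : (x₀ : X₁) ≠ 0 := fun h => hx0 (by exact_mod_cast Submodule.coe_eq_zero.mp h)
  have hnz : ‖(x₀ : X₁)‖ ≠ 0 := norm_ne_zero_iff.mpr hx0'
  refine ⟨‖(x₀ : X₁)‖⁻¹ • x₀, ?_, ?_, ?_⟩
  · rw [Submodule.coe_smul, norm_smul, Real.norm_eq_abs,
      abs_of_nonneg (inv_nonneg.mpr (norm_nonneg _))]
    exact inv_mul_cancel₀ hnz
  · intro i hi
    rw [Submodule.coe_smul, map_smul, h1 ⟨i, by omega⟩, smul_zero]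
  · intro i hi
    rw [map_smul, map_smul, h2 ⟨i, by omega⟩, smul_zero]

structure SD (U : Submodule ℝ X₁) where
  x : U
  f : ℕ →₀ ℝ
  g : ℕ →₀ ℝ
  m₁ : ℕ
  m₂ : ℕ

def Pred (b₁ : SchauderBasis X₁) (b₂ : SchauderBasis X₂) {U : Submodule ℝ X₁}
    (Tc : U →L[ℝ] X₂) (η : ℝ) (n₁ n₂ : ℕ) (s : SD U) : Prop :=
  n₁ < s.m₁ ∧ n₂ < s.m₂ ∧ ‖(s.x : X₁)‖ = 1 ∧
  s.f.support ⊆ Finset.Ioc n₁ s.m₁ ∧ s.g.support ⊆ Finset.Ioc n₂ s.m₂ ∧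
  ‖vecIn b₁.e s.f‖ = 1 ∧ ‖vecIn b₁.e s.f - (s.x : X₁)‖ ≤ η ∧
  ‖vecIn b₂.e s.g - Tc s.x‖ ≤ η

theorem step (b₁ : SchauderBasis X₁) (b₂ : SchauderBasis X₂) {U : Submodule ℝ X₁}
    (hU : ¬ FiniteDimensional ℝ U) (Tc : U →L[ℝ] X₂) {η : ℝ} (hη : 0 < η)
    (n₁ n₂ : ℕ) : ∃ s : SD U, Pred b₁ b₂ Tc η n₁ n₂ s := by
  obtain ⟨x, hx1, hcoord₁, hcoord₂⟩ := exists_unit_vanishing b₁ b₂ U hU Tc n₁ n₂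
  have hη'pos : (0:ℝ) < min (η/2) 2⁻¹ := lt_min (by linarith) (by norm_num)
  set η' := min (η/2) 2⁻¹ with hη'
  obtain ⟨h₁, m₁, hm₁, hsupp₁, happrox₁⟩ := truncate b₁ (x : X₁) n₁ hcoord₁ hη'pos
  obtain ⟨g, m₂, hm₂, hsupp₂, happrox₂⟩ := truncate b₂ (Tc x) n₂ hcoord₂ hη
  set z := vecIn b₁.e h₁ with hz
  have hz1 : |‖z‖ - 1| ≤ η' := by
    have h := abs_norm_sub_norm_le z (x : X₁)
    rw [hx1] at h
    exact le_trans h happrox₁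
  have hη'le : η' ≤ 2⁻¹ := min_le_right _ _
  have hη'le2 : η' ≤ η/2 := min_le_left _ _
  have hzpos : (0:ℝ) < ‖z‖ := by
    have h := (abs_le.mp hz1).1
    linarith
  refine ⟨⟨x, ‖z‖⁻¹ • h₁, g, m₁, m₂⟩, hm₁, hm₂, hx1, ?_, hsupp₂, ?_, ?_, happrox₂⟩
  · exact le_trans Finsupp.support_smul hsupp₁
  · rw [vecIn_smul, ← hz, norm_smul, Real.norm_eq_abs,
      abs_of_nonneg (inv_nonneg.mpr (norm_nonneg _))]
    exact inv_mul_cancel₀ (ne_of_gt hzpos)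
  · rw [vecIn_smul, ← hz]
    have e0 : (‖z‖⁻¹ - 1) * ‖z‖ = 1 - ‖z‖ := by field_simp
    have e1 : ‖‖z‖⁻¹ • z - z‖ = |1 - ‖z‖| := by
      have e2 : ‖z‖⁻¹ • z - z = (‖z‖⁻¹ - 1) • z := by rw [sub_smul, one_smul]
      rw [e2, norm_smul, Real.norm_eq_abs]
      calc |‖z‖⁻¹ - 1| * ‖z‖ = |(‖z‖⁻¹ - 1) * ‖z‖| := by
            rw [abs_mul, abs_of_nonneg (norm_nonneg z)]
      _ = |1 - ‖z‖| := by rw [e0]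
    have tri := dist_triangle (‖z‖⁻¹ • z) z (x : X₁)
    rw [dist_eq_norm, dist_eq_norm, dist_eq_norm] at tri
    have habs : |1 - ‖z‖| ≤ η' := by rw [abs_sub_comm]; exact hz1
    calc ‖‖z‖⁻¹ • z - (x:X₁)‖ ≤ ‖‖z‖⁻¹ • z - z‖ + ‖z - (x:X₁)‖ := tri
    _ ≤ η' + η' := by rw [e1]; exact add_le_add habs happrox₁
    _ ≤ η := by linarith

variable (b₁ : SchauderBasis X₁) (b₂ : SchauderBasis X₂) {U : Submodule ℝ X₁}

noncomputable def glide (hU : ¬ FiniteDimensional ℝ U) (Tc : U →L[ℝ] X₂)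
    (η : ℕ → ℝ) (hη : ∀ k, 0 < η k) : ℕ → SD U
  | 0 => (step b₁ b₂ hU Tc (hη 0) 0 0).choose
  | k+1 => (step b₁ b₂ hU Tc (hη (k+1))
      (glide hU Tc η hη k).m₁ (glide hU Tc η hη k).m₂).choose

def ν₁ (hU : ¬ FiniteDimensional ℝ U) (Tc : U →L[ℝ] X₂)
    (η : ℕ → ℝ) (hη : ∀ k, 0 < η k) : ℕ → ℕ
  | 0 => 0
  | k+1 => (glide b₁ b₂ hU Tc η hη k).m₁

def ν₂ (hU : ¬ FiniteDimensional ℝ U) (Tc : U →L[ℝ] X₂)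
    (η : ℕ → ℝ) (hη : ∀ k, 0 < η k) : ℕ → ℕ
  | 0 => 0
  | k+1 => (glide b₁ b₂ hU Tc η hη k).m₂

theorem glide_spec (hU : ¬ FiniteDimensional ℝ U) (Tc : U →L[ℝ] X₂)
    (η : ℕ → ℝ) (hη : ∀ k, 0 < η k) (k : ℕ) :
    Pred b₁ b₂ Tc (η k) (ν₁ b₁ b₂ hU Tc η hη k) (ν₂ b₁ b₂ hU Tc η hη k)
      (glide b₁ b₂ hU Tc η hη k) := by
  cases k with
  | zero =>
    show Pred b₁ b₂ Tc (η 0) 0 0 _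
    exact (step b₁ b₂ hU Tc (hη 0) 0 0).choose_spec
  | succ k =>
    exact (step b₁ b₂ hU Tc (hη (k+1))
      (glide b₁ b₂ hU Tc η hη k).m₁ (glide b₁ b₂ hU Tc η hη k).m₂).choose_spec

end Glide3

/-! ## STATEMENT 3 -/


set_option maxHeartbeats 2000000
set_option synthInstance.maxHeartbeats 400000

theorem statement3 (X₁ X₂ : Type*)
    [NormedAddCommGroup X₁] [NormedSpace ℝ X₁] [CompleteSpace X₁]
    [NormedAddCommGroup X₂] [NormedSpace ℝ X₂] [CompleteSpace X₂]
    (b₁ : SchauderBasis X₁) (b₂ : SchauderBasis X₂)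
    (hs₁ : Shrinking b₁) (hs₂ : Shrinking b₂)
    (d₁ d₂ : ℝ) (N₁ P₁ N₂ P₂ : ℕ → ℕ) (δ : ℕ → ℝ)
    (hdp₁ : DistortionProperty b₁ d₁ N₁ P₁ δ)
    (hdp₂ : DistortionProperty b₂ d₂ N₂ P₂ δ)
    (hratio : Tendsto (fun i => δ (i + 1) / δ i) atTop (𝓝 (0 : ℝ)))
    (hmatch : ∀ i₀ : ℕ, ∃ i j : ℕ, i₀ < j ∧ j < i ∧ N₁ i = N₂ j) :
    TotallyIncomparable X₁ X₂ := by
  intro U V hUb hVb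
  refine ⟨fun T => ?_⟩
  have hUfd : ¬ FiniteDimensional ℝ U := hUb.2
  -- the composed operator into `X₂` and its bounds
  obtain ⟨Tc, hTcdef⟩ : ∃ Tc : U →L[ℝ] X₂, Tc = V.subtypeL.comp (T : U →L[ℝ] V) := ⟨_, rfl⟩
  obtain ⟨A, hAdef⟩ : ∃ A : ℝ, A = ‖(T.symm : V →L[ℝ] U)‖ + 1 := ⟨_, rfl⟩
  obtain ⟨B, hBdef⟩ : ∃ B : ℝ, B = ‖(T : U →L[ℝ] V)‖ + 1 := ⟨_, rfl⟩
  have hA1 : 1 ≤ A := by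
    have := ContinuousLinearMap.opNorm_nonneg (T.symm : V →L[ℝ] U)
    rw [hAdef]; linarith
  have hB1 : 1 ≤ B := by
    have := ContinuousLinearMap.opNorm_nonneg (T : U →L[ℝ] V)
    rw [hBdef]; linarith
  have hA0 : (0:ℝ) < A := by linarith
  have hB0 : (0:ℝ) < B := by linarith
  have hupper : ∀ u : U, ‖Tc u‖ ≤ B * ‖(u : X₁)‖ := by
    intro u
    have h1 : ‖(T : U →L[ℝ] V) u‖ ≤ ‖(T : U →L[ℝ] V)‖ * ‖u‖ :=
      ContinuousLinearMap.le_opNorm _ u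
    rw [ContinuousLinearEquiv.coe_coe] at h1
    have h2 : Tc u = ((T u : V) : X₂) := by rw [hTcdef]; rfl
    have h3 : ‖T u‖ = ‖((T u : V) : X₂)‖ := Submodule.coe_norm _
    have h4 : ‖u‖ = ‖(u : X₁)‖ := Submodule.coe_norm _
    rw [h2, ← h3]
    calc ‖T u‖ ≤ ‖(T : U →L[ℝ] V)‖ * ‖u‖ := h1
    _ ≤ B * ‖(u : X₁)‖ := by
        rw [← h4, hBdef]
        have := norm_nonneg u
        have := ContinuousLinearMap.opNorm_nonneg (T : U →L[ℝ] V)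
        nlinarith
  have hlower : ∀ u : U, ‖(u : X₁)‖ ≤ A * ‖Tc u‖ := by
    intro u
    have h1 : ‖(T.symm : V →L[ℝ] U) (T u)‖ ≤ ‖(T.symm : V →L[ℝ] U)‖ * ‖T u‖ :=
      ContinuousLinearMap.le_opNorm _ _
    rw [ContinuousLinearEquiv.coe_coe, T.symm_apply_apply] at h1
    have h2 : Tc u = ((T u : V) : X₂) := by rw [hTcdef]; rfl
    have h3 : ‖T u‖ = ‖((T u : V) : X₂)‖ := Submodule.coe_norm _
    have h4 : ‖u‖ = ‖(u : X₁)‖ := Submodule.coe_norm _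
    rw [h2, ← h3]
    calc ‖(u : X₁)‖ = ‖u‖ := h4.symm
    _ ≤ ‖(T.symm : V →L[ℝ] U)‖ * ‖T u‖ := h1
    _ ≤ A * ‖T u‖ := by
        rw [hAdef]
        have := norm_nonneg (T u)
        have := ContinuousLinearMap.opNorm_nonneg (T.symm : V →L[ℝ] U)
        nlinarith
  -- projection constant of `b₁`
  obtain ⟨K, hK1, hK⟩ := exists_projBound b₁
  have hK0 : (0:ℝ) < K := by linarith
  -- choice of the indices `i > j`
  have hd₁pos : (0:ℝ) < d₁ := lt_trans one_pos hdp₁.one_lt_d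
  have hrpos : (0:ℝ) < (4*A*B*d₁)⁻¹ := by positivity
  obtain ⟨i₀, hi₀⟩ := eventually_atTop.mp (hratio.eventually_lt_const hrpos)
  obtain ⟨i, j, hi₀j, hji, hNij⟩ := hmatch i₀
  have hδanti : Antitone δ := antitone_nat_of_succ_le hdp₁.δ_anti
  have hδjpos := hdp₁.δ_pos j
  have hδipos := hdp₁.δ_pos i
  have hstep : δ (j+1) < (4*A*B*d₁)⁻¹ * δ j := by
    have h := hi₀ j (le_of_lt hi₀j)
    rwa [div_lt_iff₀ hδjpos] at h
  have hdlt : d₁ * δ i ≤ δ j / (4*A*B) := by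
    have h1 : δ i ≤ δ (j+1) := hδanti (by omega)
    have h3 : d₁ * ((4*A*B*d₁)⁻¹ * δ j) = δ j / (4*A*B) := by
      field_simp <;> ring
    calc d₁ * δ i ≤ d₁ * δ (j+1) := by nlinarith
    _ ≤ d₁ * ((4*A*B*d₁)⁻¹ * δ j) := by nlinarith
    _ = δ j / (4*A*B) := h3
  -- the perturbation parameter
  obtain ⟨ε, hεdef⟩ : ∃ ε : ℝ,
      ε = min ((4*K*A)⁻¹) (min ((2*K)⁻¹) (δ j / (4*A*(B+1)*K))) := ⟨_, rfl⟩
  have hεpos : 0 < ε := by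
    rw [hεdef]
    refine lt_min (by positivity) (lt_min (by positivity) (by positivity))
  have hKεpos : 0 < K * ε := by positivity
  have hKε1 : K * ε ≤ (4*A)⁻¹ := by
    have h1 : ε ≤ (4*K*A)⁻¹ := hεdef ▸ min_le_left _ _
    have h2 : K * (4*K*A)⁻¹ = (4*A)⁻¹ := by
      field_simp <;> ring
    calc K * ε ≤ K * (4*K*A)⁻¹ := mul_le_mul_of_nonneg_left h1 hK0.le
    _ = (4*A)⁻¹ := h2
  have hKε2 : K * ε ≤ 2⁻¹ := by
    have h1 : ε ≤ (2*K)⁻¹ := hεdef ▸ le_trans (min_le_right _ _) (min_le_left _ _)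
    have h2 : K * (2*K)⁻¹ = 2⁻¹ := by
      field_simp <;> ring
    calc K * ε ≤ K * (2*K)⁻¹ := mul_le_mul_of_nonneg_left h1 hK0.le
    _ = 2⁻¹ := h2
  have hKε3 : (B+1) * (K*ε) ≤ δ j / (4*A) := by
    have h1 : ε ≤ δ j / (4*A*(B+1)*K) :=
      hεdef ▸ le_trans (min_le_right _ _) (min_le_right _ _)
    have h2 : (B+1) * (K * (δ j / (4*A*(B+1)*K))) = δ j / (4*A) := by
      have hB1' : (0:ℝ) < B + 1 := by linarith
      field_simp <;> ring
    calc (B+1) * (K*ε) ≤ (B+1) * (K * (δ j / (4*A*(B+1)*K))) := by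
          apply mul_le_mul_of_nonneg_left _ (by positivity : (0:ℝ) ≤ B+1)
          exact mul_le_mul_of_nonneg_left h1 hK0.le
    _ = δ j / (4*A) := h2
  -- the gliding hump
  obtain ⟨f, g, x, ν₁', ν₂', hν₁lt, hν₂lt, hxnorm, hsuppf, hsuppg, hfnorm, hfx, hgx⟩ :
      ∃ (f g : ℕ → ℕ →₀ ℝ) (x : ℕ → U) (ν₁' ν₂' : ℕ → ℕ),
        (∀ k, ν₁' k < ν₁' (k+1)) ∧ (∀ k, ν₂' k < ν₂' (k+1)) ∧
        (∀ k, ‖((x k : U) : X₁)‖ = 1) ∧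
        (∀ k, (f k).support ⊆ Finset.Ioc (ν₁' k) (ν₁' (k+1))) ∧
        (∀ k, (g k).support ⊆ Finset.Ioc (ν₂' k) (ν₂' (k+1))) ∧
        (∀ k, ‖vecIn b₁.e (f k)‖ = 1) ∧
        (∀ k, ‖vecIn b₁.e (f k) - ((x k : U) : X₁)‖ ≤ ε * (2⁻¹:ℝ)^(k+1)) ∧
        (∀ k, ‖vecIn b₂.e (g k) - Tc (x k)‖ ≤ ε * (2⁻¹:ℝ)^(k+1)) := by
    have hηpos : ∀ k, 0 < ε * (2⁻¹:ℝ)^(k+1) := fun k => by positivity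
    refine ⟨fun k => (glide b₁ b₂ hUfd Tc _ hηpos k).f,
      fun k => (glide b₁ b₂ hUfd Tc _ hηpos k).g,
      fun k => (glide b₁ b₂ hUfd Tc _ hηpos k).x,
      ν₁ b₁ b₂ hUfd Tc _ hηpos, ν₂ b₁ b₂ hUfd Tc _ hηpos, ?_, ?_, ?_, ?_, ?_, ?_, ?_, ?_⟩ <;>
      intro k <;>
      have hsp := glide_spec b₁ b₂ hUfd Tc (fun k => ε * (2⁻¹:ℝ)^(k+1)) hηpos k
    · exact hsp.1
    · exact hsp.2.1
    · exact hsp.2.2.1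
    · exact hsp.2.2.2.1
    · exact hsp.2.2.2.2.1
    · exact hsp.2.2.2.2.2.1
    · exact hsp.2.2.2.2.2.2.1
    · exact hsp.2.2.2.2.2.2.2
  have hν₁mono : Monotone ν₁' := (strictMono_nat_of_lt_succ hν₁lt).monotone
  have hν₂mono : Monotone ν₂' := (strictMono_nat_of_lt_succ hν₂lt).monotone
  have hblockf : IsBlockSeq f := by
    constructor
    · intro k h0
      have h := hfnorm k
      rw [h0, vecIn_zero, norm_zero] at h
      norm_num at h
    · intro k l hl l' hl'
      have h1 := hsuppf k hl
      have h2 := hsuppf (k+1) hl'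
      rw [Finset.mem_Ioc] at h1 h2
      have h3 : ν₁' (k+1) ≤ ν₁' (k+1) := le_refl _
      omega
  -- the contradiction with `tau_lt`
  have htau := hdp₁.tau_lt i f hblockf
  have hletau : ((N₁ i : ℕ) : ℕ∞) ≤ tau b₁.e f (d₁ * δ i) := by
    apply le_sSup
    refine ⟨N₁ i, rfl, ?_⟩
    intro v hv hvnorm
    refine ⟨id, strictMono_id, ?_⟩
    obtain ⟨hbv, D, hbD, hvD⟩ := hv
    obtain ⟨w, hw_eq⟩ : ∃ w : ℕ → ℕ →₀ ℝ,
        ∀ m, w m = ∑ i' ∈ (D m).support, D m i' • g i' :=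
      ⟨fun m => (D m).sum fun i' a => a • g i', fun m => rfl⟩
    obtain ⟨ξ, hξ_eq⟩ : ∃ ξ : ℕ → U,
        ∀ m, ξ m = ∑ i' ∈ (D m).support, D m i' • x i' :=
      ⟨fun m => (D m).sum fun i' a => a • x i', fun m => rfl⟩
    obtain ⟨t, ht_eq⟩ : ∃ t : ℕ → ℝ, ∀ m, t m = ‖vecIn b₂.e (w m)‖ := ⟨_, fun m => rfl⟩
    have hv_eq : ∀ m, v m = ∑ i' ∈ (D m).support, D m i' • f i' := fun m => hvD m
    have hvecv : ∀ m, vecIn b₁.e (v m)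
        = ∑ i' ∈ (D m).support, D m i' • vecIn b₁.e (f i') := by
      intro m
      rw [hv_eq m, vecIn_eq_lc, map_sum]
      exact Finset.sum_congr rfl fun i' _ => by rw [map_smul, ← vecIn_eq_lc]
    have hvecw : ∀ m, vecIn b₂.e (w m)
        = ∑ i' ∈ (D m).support, D m i' • vecIn b₂.e (g i') := by
      intro m
      rw [hw_eq m, vecIn_eq_lc, map_sum]
      exact Finset.sum_congr rfl fun i' _ => by rw [map_smul, ← vecIn_eq_lc]
    have hcoeξ : ∀ m, ((ξ m : U) : X₁)
        = ∑ i' ∈ (D m).support, D m i' • ((x i' : U) : X₁) := by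
      intro m
      rw [hξ_eq m]
      have h1 : ((∑ i' ∈ (D m).support, D m i' • x i' : U) : X₁)
          = U.subtype (∑ i' ∈ (D m).support, D m i' • x i') := rfl
      rw [h1, map_sum]
      exact Finset.sum_congr rfl fun i' _ => by rw [map_smul]; rfl
    have hTcξ : ∀ m, Tc (ξ m) = ∑ i' ∈ (D m).support, D m i' • Tc (x i') := by
      intro m
      rw [hξ_eq m, map_sum]
      exact Finset.sum_congr rfl fun i' _ => map_smul Tc _ _
    have hcb : ∀ m i', |D m i'| ≤ K := by
      intro m i'
      have h := coeff_bound b₁ hK1 hK ν₁' hν₁mono f hsuppf (D m) (v m) (hvD m) i'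
      rw [hfnorm i', mul_one, hvnorm m, mul_one] at h
      exact h
    have he1 : ∀ m, ‖vecIn b₁.e (v m) - ((ξ m : U) : X₁)‖ ≤ K * ε := by
      intro m
      rw [hvecv m, hcoeξ m, ← Finset.sum_sub_distrib]
      calc ‖∑ i' ∈ (D m).support,
            (D m i' • vecIn b₁.e (f i') - D m i' • ((x i' : U) : X₁))‖
          ≤ ∑ i' ∈ (D m).support,
            ‖D m i' • vecIn b₁.e (f i') - D m i' • ((x i' : U) : X₁)‖ :=
        norm_sum_le _ _
      _ ≤ ∑ i' ∈ (D m).support, K * (ε * (2⁻¹:ℝ)^(i'+1)) := by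
          apply Finset.sum_le_sum
          intro i' _
          rw [← smul_sub, norm_smul, Real.norm_eq_abs]
          have h1 := hcb m i'
          have h2 : ‖vecIn b₁.e (f i') - ((x i' : U) : X₁)‖ ≤ ε * (2⁻¹:ℝ)^(i'+1) := hfx i'
          exact mul_le_mul h1 h2 (norm_nonneg _) (by linarith)
      _ = K * ε * ∑ i' ∈ (D m).support, (2⁻¹:ℝ)^(i'+1) := by
          rw [Finset.mul_sum]
          exact Finset.sum_congr rfl fun i' _ => by ring
      _ ≤ K * ε * 1 := mul_le_mul_of_nonneg_left (geom_finset_le_one _) hKεpos.le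
      _ = K * ε := mul_one _
    have he2 : ∀ m, ‖vecIn b₂.e (w m) - Tc (ξ m)‖ ≤ K * ε := by
      intro m
      rw [hvecw m, hTcξ m, ← Finset.sum_sub_distrib]
      calc ‖∑ i' ∈ (D m).support,
            (D m i' • vecIn b₂.e (g i') - D m i' • Tc (x i'))‖
          ≤ ∑ i' ∈ (D m).support,
            ‖D m i' • vecIn b₂.e (g i') - D m i' • Tc (x i')‖ :=
        norm_sum_le _ _
      _ ≤ ∑ i' ∈ (D m).support, K * (ε * (2⁻¹:ℝ)^(i'+1)) := by
          apply Finset.sum_le_sum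
          intro i' _
          rw [← smul_sub, norm_smul, Real.norm_eq_abs]
          have h1 := hcb m i'
          have h2 : ‖vecIn b₂.e (g i') - Tc (x i')‖ ≤ ε * (2⁻¹:ℝ)^(i'+1) := hgx i'
          exact mul_le_mul h1 h2 (norm_nonneg _) (by linarith)
      _ = K * ε * ∑ i' ∈ (D m).support, (2⁻¹:ℝ)^(i'+1) := by
          rw [Finset.mul_sum]
          exact Finset.sum_congr rfl fun i' _ => by ring
      _ ≤ K * ε * 1 := mul_le_mul_of_nonneg_left (geom_finset_le_one _) hKεpos.le
      _ = K * ε := mul_one _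
    have hξlow : ∀ m, 1 - K*ε ≤ ‖((ξ m : U) : X₁)‖ := by
      intro m
      have h := abs_norm_sub_norm_le (vecIn b₁.e (v m)) ((ξ m : U) : X₁)
      rw [hvnorm m] at h
      have h2 := (abs_le.mp (le_trans h (he1 m))).2
      linarith
    have ht : ∀ m, (2*A)⁻¹ ≤ t m := by
      intro m
      have h1 : ‖((ξ m : U) : X₁)‖ ≤ A * ‖Tc (ξ m)‖ := hlower (ξ m)
      have h2 := abs_norm_sub_norm_le (vecIn b₂.e (w m)) (Tc (ξ m))
      have h3 := (abs_le.mp (le_trans h2 (he2 m))).1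
      rw [← ht_eq m] at h3
      have h4 : ‖Tc (ξ m)‖ ≤ t m + K*ε := by linarith
      have h5 := hξlow m
      have h8 : A * ‖Tc (ξ m)‖ ≤ A * (t m + K*ε) := mul_le_mul_of_nonneg_left h4 hA0.le
      have h8' : A * (t m + K*ε) = A * t m + A*(K*ε) := by ring
      have h9 : A * (4*A)⁻¹ = 4⁻¹ := by field_simp <;> ring
      have hAKε : A * (K*ε) ≤ 4⁻¹ := by
        calc A * (K*ε) ≤ A * (4*A)⁻¹ := mul_le_mul_of_nonneg_left hKε1 hA0.le
        _ = 4⁻¹ := h9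
      have hKε4 : K*ε ≤ 4⁻¹ := by
        have h10 : ((4*A:ℝ))⁻¹ ≤ 4⁻¹ := by
          apply inv_anti₀ (by norm_num)
          nlinarith
        linarith
      have h7 : (2:ℝ)⁻¹ ≤ A * t m := by linarith
      have h12 : ((2*A:ℝ))⁻¹ = 2⁻¹ / A := by field_simp
      rw [h12, div_le_iff₀ hA0]
      linarith
    have htpos : ∀ m, 0 < t m := fun m => lt_of_lt_of_le (by positivity) (ht m)
    obtain ⟨w', hw'_eq⟩ : ∃ w' : ℕ → ℕ →₀ ℝ, ∀ m, w' m = (t m)⁻¹ • w m := ⟨_, fun m => rfl⟩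
    have hvecw' : ∀ m, vecIn b₂.e (w' m) = (t m)⁻¹ • vecIn b₂.e (w m) := by
      intro m
      rw [hw'_eq m]
      exact vecIn_smul b₂.e _ _
    have hw'norm : ∀ m, ‖vecIn b₂.e (w' m)‖ = 1 := by
      intro m
      rw [hvecw' m, norm_smul, Real.norm_eq_abs,
        abs_of_nonneg (inv_nonneg.mpr (htpos m).le), ← ht_eq m]
      exact inv_mul_cancel₀ (ne_of_gt (htpos m))
    have hsuppw : ∀ m, ∀ l ∈ (w m).support,
        ∃ i' ∈ (D m).support, ν₂' i' < l ∧ l ≤ ν₂' (i'+1) := by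
      intro m l hl
      rw [hw_eq m] at hl
      have hl2 := Finsupp.support_finset_sum hl
      rw [Finset.mem_biUnion] at hl2
      obtain ⟨i', hi', hli'⟩ := hl2
      have hmem : l ∈ (g i').support := Finsupp.support_smul hli'
      have hIoc := hsuppg i' hmem
      rw [Finset.mem_Ioc] at hIoc
      exact ⟨i', hi', hIoc.1, hIoc.2⟩
    have hblockw' : IsBlockSeq w' := by
      constructor
      · intro m h0
        have h := hw'norm m
        rw [h0, vecIn_zero, norm_zero] at h
        norm_num at h
      · intro m l hl l' hl'
        rw [hw'_eq m] at hl
        rw [hw'_eq (m+1)] at hl'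
        have hl1 : l ∈ (w m).support := Finsupp.support_smul hl
        have hl2 : l' ∈ (w (m+1)).support := Finsupp.support_smul hl'
        obtain ⟨i₁, hi₁, hli₁⟩ := hsuppw m l hl1
        obtain ⟨i₂, hi₂, hli₂⟩ := hsuppw (m+1) l' hl2
        have hii : i₁ < i₂ := hbD.2 m i₁ hi₁ i₂ hi₂
        have hνle : ν₂' (i₁+1) ≤ ν₂' i₂ := hν₂mono (by omega)
        omega
    have spread := hdp₂.asymptotic j w' hblockw' hw'norm
    intro F hF a
    simp only [id_eq]
    have hSb0 : 0 ≤ ∑ m ∈ F, |a m| := Finset.sum_nonneg fun m _ => abs_nonneg _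
    have hF' : F ∈ Schreier (N₂ j) := hNij ▸ hF
    have hsp := spread F hF' (fun m => a m * t m)
    have hyeq : ∑ m ∈ F, (a m * t m) • vecIn b₂.e (w' m)
        = ∑ m ∈ F, a m • vecIn b₂.e (w m) := by
      refine Finset.sum_congr rfl fun m _ => ?_
      rw [hvecw' m, smul_smul, mul_assoc, mul_inv_cancel₀ (ne_of_gt (htpos m)), mul_one]
    rw [hyeq] at hsp
    have hlowsum : (2*A)⁻¹ * ∑ m ∈ F, |a m| ≤ ∑ m ∈ F, |a m * t m| := by
      rw [Finset.mul_sum]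
      apply Finset.sum_le_sum
      intro m _
      rw [abs_mul, abs_of_nonneg (htpos m).le]
      nlinarith [abs_nonneg (a m), ht m, htpos m]
    obtain ⟨ξF, hξFdef⟩ : ∃ ξF : U, ξF = ∑ m ∈ F, a m • ξ m := ⟨_, rfl⟩
    have hTcξF : Tc ξF = ∑ m ∈ F, a m • Tc (ξ m) := by
      rw [hξFdef, map_sum]
      exact Finset.sum_congr rfl fun m _ => map_smul Tc _ _
    have hcoeξF : ((ξF : U) : X₁) = ∑ m ∈ F, a m • ((ξ m : U) : X₁) := by
      have h1 : ∀ z : U, (z : X₁) = U.subtype z := fun z => rfl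
      rw [h1, hξFdef, map_sum]
      exact Finset.sum_congr rfl fun m _ => by rw [map_smul]; rfl
    have hyTc : ‖(∑ m ∈ F, a m • vecIn b₂.e (w m)) - Tc ξF‖ ≤ K*ε*(∑ m ∈ F, |a m|) := by
      rw [hTcξF, ← Finset.sum_sub_distrib]
      calc ‖∑ m ∈ F, (a m • vecIn b₂.e (w m) - a m • Tc (ξ m))‖
          ≤ ∑ m ∈ F, ‖a m • vecIn b₂.e (w m) - a m • Tc (ξ m)‖ := norm_sum_le _ _
      _ ≤ ∑ m ∈ F, |a m| * (K*ε) := by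
          apply Finset.sum_le_sum
          intro m _
          rw [← smul_sub, norm_smul, Real.norm_eq_abs]
          exact mul_le_mul_of_nonneg_left (he2 m) (abs_nonneg _)
      _ = K*ε*(∑ m ∈ F, |a m|) := by rw [← Finset.sum_mul]; ring
    have hxξF : ‖(∑ m ∈ F, a m • vecIn b₁.e (v m)) - ((ξF : U) : X₁)‖
        ≤ K*ε*(∑ m ∈ F, |a m|) := by
      rw [hcoeξF, ← Finset.sum_sub_distrib]
      calc ‖∑ m ∈ F, (a m • vecIn b₁.e (v m) - a m • ((ξ m : U) : X₁))‖
          ≤ ∑ m ∈ F, ‖a m • vecIn b₁.e (v m) - a m • ((ξ m : U) : X₁)‖ := norm_sum_le _ _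
      _ ≤ ∑ m ∈ F, |a m| * (K*ε) := by
          apply Finset.sum_le_sum
          intro m _
          rw [← smul_sub, norm_smul, Real.norm_eq_abs]
          exact mul_le_mul_of_nonneg_left (he1 m) (abs_nonneg _)
      _ = K*ε*(∑ m ∈ F, |a m|) := by rw [← Finset.sum_mul]; ring
    have hTcnormξF : ‖Tc ξF‖ ≤ B * ‖((ξF : U) : X₁)‖ := hupper ξF
    have hnx : ‖((ξF : U) : X₁)‖
        ≤ ‖∑ m ∈ F, a m • vecIn b₁.e (v m)‖ + K*ε*(∑ m ∈ F, |a m|) := by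
      have h := abs_norm_sub_norm_le ((ξF : U) : X₁) (∑ m ∈ F, a m • vecIn b₁.e (v m))
      rw [norm_sub_rev] at h
      have h2 := (abs_le.mp (le_trans h hxξF)).2
      linarith
    have hynorm : δ j * ((2*A)⁻¹ * ∑ m ∈ F, |a m|)
        ≤ ‖∑ m ∈ F, a m • vecIn b₂.e (w m)‖ := by
      have h1 : δ j * ((2*A)⁻¹ * ∑ m ∈ F, |a m|) ≤ δ j * ∑ m ∈ F, |a m * t m| :=
        mul_le_mul_of_nonneg_left hlowsum (hdp₂.δ_pos j).le
      exact le_trans h1 hsp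
    have hyup : ‖∑ m ∈ F, a m • vecIn b₂.e (w m)‖
        ≤ B * ‖∑ m ∈ F, a m • vecIn b₁.e (v m)‖ + (B+1)*(K*ε)*(∑ m ∈ F, |a m|) := by
      have h1 : ‖∑ m ∈ F, a m • vecIn b₂.e (w m)‖ ≤ ‖Tc ξF‖ + K*ε*(∑ m ∈ F, |a m|) := by
        have h := abs_norm_sub_norm_le (∑ m ∈ F, a m • vecIn b₂.e (w m)) (Tc ξF)
        have h2 := (abs_le.mp (le_trans h hyTc)).2
        linarith
      have h2 : B * ‖((ξF : U) : X₁)‖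
          ≤ B * (‖∑ m ∈ F, a m • vecIn b₁.e (v m)‖ + K*ε*(∑ m ∈ F, |a m|)) :=
        mul_le_mul_of_nonneg_left hnx hB0.le
      have h3 : B * (‖∑ m ∈ F, a m • vecIn b₁.e (v m)‖ + K*ε*(∑ m ∈ F, |a m|))
          = B*‖∑ m ∈ F, a m • vecIn b₁.e (v m)‖ + B*(K*ε)*(∑ m ∈ F, |a m|) := by ring
      have h4 : (B+1)*(K*ε)*(∑ m ∈ F, |a m|)
          = B*(K*ε)*(∑ m ∈ F, |a m|) + K*ε*(∑ m ∈ F, |a m|) := by ring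
      linarith
    -- numerical finish
    have h1 : (B+1)*(K*ε)*(∑ m ∈ F, |a m|) ≤ (δ j/(4*A))*(∑ m ∈ F, |a m|) :=
      mul_le_mul_of_nonneg_right hKε3 hSb0
    have h2 : δ j * ((2*A)⁻¹ * ∑ m ∈ F, |a m|) = (δ j/(2*A))*(∑ m ∈ F, |a m|) := by
      field_simp <;> ring
    have h3 : δ j/(2*A) - δ j/(4*A) = δ j/(4*A) := by
      field_simp <;> ring
    have h3' : (δ j/(2*A))*(∑ m ∈ F, |a m|)
        = (δ j/(4*A))*(∑ m ∈ F, |a m|) + (δ j/(4*A))*(∑ m ∈ F, |a m|) := by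
      rw [← h3]; ring
    have h4 : (δ j/(4*A))*(∑ m ∈ F, |a m|) ≤ B*‖∑ m ∈ F, a m • vecIn b₁.e (v m)‖ := by
      linarith
    have h5 : (d₁ * δ i) * (∑ m ∈ F, |a m|) * B ≤ (δ j/(4*A*B))*(∑ m ∈ F, |a m|)*B :=
      mul_le_mul_of_nonneg_right (mul_le_mul_of_nonneg_right hdlt hSb0) hB0.le
    have h6 : (δ j/(4*A*B))*(∑ m ∈ F, |a m|)*B = (δ j/(4*A))*(∑ m ∈ F, |a m|) := by
      field_simp <;> ring
    have h7 : (d₁ * δ i)*(∑ m ∈ F, |a m|)*B ≤ ‖∑ m ∈ F, a m • vecIn b₁.e (v m)‖*B := by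
      calc (d₁ * δ i)*(∑ m ∈ F, |a m|)*B ≤ (δ j/(4*A*B))*(∑ m ∈ F, |a m|)*B := h5
      _ = (δ j/(4*A))*(∑ m ∈ F, |a m|) := h6
      _ ≤ B*‖∑ m ∈ F, a m • vecIn b₁.e (v m)‖ := h4
      _ = ‖∑ m ∈ F, a m • vecIn b₁.e (v m)‖*B := mul_comm _ _
    exact le_of_mul_le_mul_right h7 hB0
  have hfin : ((N₁ i : ℕ) : ℕ∞) < ((P₁ i : ℕ) : ℕ∞) := lt_of_le_of_lt hletau htau
  have hNPi : N₁ i < P₁ i := by exact_mod_cast hfin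
  have hPN := hdp₁.P_lt_N i
  omega

end Gasparis
end
end

section
/- Fix M = (m_i) and L = (l_i) as in the definition of M-good. Then: (a) the set 𝓓 = {N ∈ [ℕ] : N is M-good} is closed in the topology of pointwise convergence on [ℕ]; (b) for every R ∈ [ℕ] there exists N ∈ [R] which is M-good; and (c) there exists N_0 ∈ [ℕ] such that every infinite subset of N_0 is M-good. -/
open Filter Topology

open scoped Classical

noncomputable section

namespace Gasparis

variable {X : Type*}

/-! ### Auxiliary lemmas for Statement 14 -/

lemma nth_eq_of_strictMono {f : ℕ → ℕ} (hf : StrictMono f) (k : ℕ) :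
    Nat.nth (fun i => i ∈ Set.range f) k = f k := by
  induction k using Nat.strong_induction_on with
  | _ k ih =>
    rw [Nat.nth_eq_sInf]
    refine IsLeast.csInf_eq ⟨⟨⟨k, rfl⟩, ?_⟩, ?_⟩
    · intro i hi; rw [ih i hi]; exact hf hi
    · rintro x ⟨⟨a, rfl⟩, hx⟩
      rcases lt_or_ge a k with h | h
      · have := hx a h; rw [ih a h] at this; exact absurd this (lt_irrefl _)
      · exact hf.monotone h

lemma nth_congr_of_agree {p q : ℕ → Prop} (hp : (setOf p).Infinite) (hq : (setOf q).Infinite)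
    {b : ℕ} (hagree : ∀ x ≤ b, (p x ↔ q x)) {j : ℕ} (hb : Nat.nth p j ≤ b) :
    ∀ i ≤ j, Nat.nth p i = Nat.nth q i := by
  intro i
  induction i using Nat.strong_induction_on with
  | _ i ih =>
    intro hi
    have hpi : Nat.nth p i ≤ b := le_trans (Nat.nth_monotone hp hi) hb
    have h1 : Nat.nth q i ≤ Nat.nth p i := by
      refine (Nat.isLeast_nth_of_infinite hq i).2 ⟨(hagree _ hpi).1 (Nat.nth_mem_of_infinite hp i),
        fun k hk => ?_⟩
      rw [← ih k hk (le_trans hk.le hi)]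
      exact Nat.nth_strictMono hp hk
    refine le_antisymm ?_ h1
    have hqi : Nat.nth q i ≤ b := le_trans h1 hpi
    refine (Nat.isLeast_nth_of_infinite hp i).2 ⟨(hagree _ hqi).2 (Nat.nth_mem_of_infinite hq i),
      fun k hk => ?_⟩
    rw [ih k hk (le_trans hk.le hi)]
    exact Nat.nth_strictMono hq hk

lemma fN_congr {m n n' : ℕ → ℕ} {j : ℕ} (h : ∀ i < j, n i = n' i) : fN m n j = fN m n' j := by
  cases j with
  | zero => rfl
  | succ j =>
    have hsum : ∀ ρ : ℕ → ℕ, ∑ i ∈ Finset.range (j+1), ρ i * n i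
        = ∑ i ∈ Finset.range (j+1), ρ i * n' i :=
      fun ρ => Finset.sum_congr rfl fun i hi => by rw [h i (Finset.mem_range.mp hi)]
    show sSup _ = sSup _
    congr 1
    ext s
    constructor
    · rintro ⟨ρ, h1, rfl⟩; exact ⟨ρ, h1, hsum ρ⟩
    · rintro ⟨ρ, h1, rfl⟩; exact ⟨ρ, h1, (hsum ρ).symm⟩

lemma sum_rho_lt {m : ℕ → ℕ} (hm : ∀ i, 2 ≤ m i) {j : ℕ} {ρ : ℕ → ℕ}
    (hρ : ∏ i ∈ Finset.range j, m i ^ ρ i < m j ^ 3) :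
    ∑ i ∈ Finset.range j, ρ i < m j ^ 3 := by
  have h1 : 2 ^ (∑ i ∈ Finset.range j, ρ i) ≤ ∏ i ∈ Finset.range j, m i ^ ρ i := by
    rw [← Finset.prod_pow_eq_pow_sum]
    exact Finset.prod_le_prod' fun i _ => Nat.pow_le_pow_left (hm i) _
  calc ∑ i ∈ Finset.range j, ρ i < 2 ^ (∑ i ∈ Finset.range j, ρ i) := Nat.lt_two_pow_self
    _ ≤ _ := h1
    _ < _ := hρ

lemma fN_le {m : ℕ → ℕ} (hm : ∀ i, 2 ≤ m i) {n : ℕ → ℕ} (hn : Monotone n) (j : ℕ) :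
    fN m n (j + 1) ≤ m (j + 1) ^ 3 * n j := by
  show sSup _ ≤ _
  refine csSup_le ⟨0, fun _ => 0, ?_, by simp⟩ ?_
  · simp only [pow_zero, Finset.prod_const_one]
    calc (1:ℕ) < 2 ^ 3 := by norm_num
      _ ≤ m (j+1) ^ 3 := Nat.pow_le_pow_left (hm _) _
  · rintro s ⟨ρ, h1, rfl⟩
    calc ∑ i ∈ Finset.range (j+1), ρ i * n i
        ≤ ∑ i ∈ Finset.range (j+1), ρ i * n j :=
          Finset.sum_le_sum fun i hi =>
            Nat.mul_le_mul_left _ (hn (Nat.le_of_lt_succ (Finset.mem_range.mp hi)))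
      _ = (∑ i ∈ Finset.range (j+1), ρ i) * n j := by rw [Finset.sum_mul]
      _ ≤ m (j+1)^3 * n j := Nat.mul_le_mul_right _ (le_of_lt (sum_rho_lt hm h1))

lemma good_of_growth (m l : ℕ → ℕ) (hml : MLParams m l) (n : ℕ → ℕ)
    (hn : StrictMono n)
    (hstep : ∀ k, l k * (m k ^ 3 * (if k = 0 then 1 else n (k - 1)) + 1) < n k)
    (φ : ℕ → ℕ) (hφ : StrictMono φ) :
    MGoodSeq m l (n ∘ φ) := by
  have hm2 : ∀ i, 2 ≤ m i := fun i =>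
    le_trans (by have := hml.m_six; omega) (hml.m_mono.monotone (Nat.zero_le i))
  refine ⟨hn.comp hφ, fun j => ?_⟩
  cases j with
  | zero =>
    have h0 := hstep 0
    simp only [↓reduceIte, mul_one] at h0
    have : l 0 * (fN m (n ∘ φ) 0 + 1) ≤ l 0 * (m 0 ^ 3 + 1) := by
      have h1 : fN m (n ∘ φ) 0 = 1 := rfl
      rw [h1]
      have h8 : (2:ℕ) ≤ m 0 ^ 3 := le_trans (by norm_num) (Nat.pow_le_pow_left (hm2 0) 3)
      exact Nat.mul_le_mul_left _ (by omega)
    exact lt_of_le_of_lt this (lt_of_lt_of_le h0 (hn.monotone (Nat.zero_le (φ 0))))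
  | succ j =>
    set K := φ (j + 1) with hK
    have hK1 : j + 1 ≤ K := hφ.le_apply
    have hKne : K ≠ 0 := by omega
    have hfn : fN m (n ∘ φ) (j + 1) ≤ m (j + 1) ^ 3 * n (φ j) :=
      fN_le hm2 (hn.monotone.comp hφ.monotone) j
    have hφj : φ j ≤ K - 1 := Nat.le_pred_of_lt (hφ (Nat.lt_succ_self j))
    have hchain : l (j + 1) * (fN m (n ∘ φ) (j + 1) + 1)
        ≤ l K * (m K ^ 3 * n (K - 1) + 1) := by
      refine Nat.mul_le_mul (hml.l_mono.monotone hK1) ?_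
      have h1 : m (j + 1) ^ 3 ≤ m K ^ 3 := Nat.pow_le_pow_left (hml.m_mono.monotone hK1) 3
      have h2 : n (φ j) ≤ n (K - 1) := hn.monotone hφj
      have := Nat.mul_le_mul h1 h2
      omega
    have hlast := hstep K
    rw [if_neg hKne] at hlast
    exact lt_of_le_of_lt hchain hlast

lemma exists_growth (m l : ℕ → ℕ) {R : Set ℕ} (hR : R.Infinite) :
    ∃ n : ℕ → ℕ, StrictMono n ∧ (∀ k, n k ∈ R) ∧
      ∀ k, l k * (m k ^ 3 * (if k = 0 then 1 else n (k - 1)) + 1) < n k := by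
  choose g hg1 hg2 using hR.exists_gt
  set F : ℕ → ℕ → ℕ := fun k prev => g (max prev (l k * (m k ^ 3 * prev + 1))) with hF
  set n : ℕ → ℕ := fun k => Nat.rec (F 0 1) (fun k nk => F (k + 1) nk) k with hn
  have hsucc : ∀ k, n (k + 1) = F (k + 1) (n k) := fun k => rfl
  have h0 : n 0 = F 0 1 := rfl
  have hmem : ∀ k, n k ∈ R := by
    intro k; cases k with
    | zero => exact hg1 _
    | succ k => rw [hsucc]; exact hg1 _
  have hgt : ∀ k prev, prev < F k prev ∧ l k * (m k ^ 3 * prev + 1) < F k prev := by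
    intro k prev
    exact ⟨lt_of_le_of_lt (le_max_left _ _) (hg2 _),
      lt_of_le_of_lt (le_max_right _ _) (hg2 _)⟩
  refine ⟨n, strictMono_nat_of_lt_succ fun k => ?_, hmem, fun k => ?_⟩
  · rw [hsucc]; exact (hgt (k + 1) (n k)).1
  · cases k with
    | zero => rw [if_pos rfl, h0]; exact (hgt 0 1).2
    | succ k => rw [if_neg (Nat.succ_ne_zero k), hsucc]; exact (hgt (k + 1) (n k)).2

lemma good_of_range (m l : ℕ → ℕ) (hml : MLParams m l) (n : ℕ → ℕ)
    (hn : StrictMono n)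
    (hstep : ∀ k, l k * (m k ^ 3 * (if k = 0 then 1 else n (k - 1)) + 1) < n k)
    (S : ℕ → Bool) (hS : {i | S i = true}.Infinite)
    (hsub : ∀ i, S i = true → i ∈ Set.range n) :
    MGoodB m l S := by
  have hnth : ∀ j, ∃ k, n k = enumOf S j := by
    intro j
    have h1 : S (Nat.nth (fun i => S i = true) j) = true := Nat.nth_mem_of_infinite hS j
    exact hsub _ h1
  choose φ hφ using hnth
  have hφm : StrictMono φ := by
    intro a c hac
    have h2 : n (φ a) < n (φ c) := by
      rw [hφ a, hφ c]; exact Nat.nth_strictMono hS hac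
    exact hn.lt_iff_lt.mp h2
  have heq : enumOf S = n ∘ φ := funext fun j => (hφ j).symm
  unfold MGoodB
  rw [heq]
  exact good_of_growth m l hml n hn hstep φ hφm

/-! ## STATEMENT 14 -/


theorem statement14 (m l : ℕ → ℕ) (hml : MLParams m l) :
    IsClosed {S : {T : ℕ → Bool // {i | T i = true}.Infinite} | MGoodB m l S.1} ∧
    (∀ R : ℕ → Bool, {i | R i = true}.Infinite →
      ∃ S : ℕ → Bool, {i | S i = true}.Infinite ∧ (∀ i, S i = true → R i = true) ∧
        MGoodB m l S) ∧
    (∃ N₀ : ℕ → Bool, {i | N₀ i = true}.Infinite ∧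
      ∀ S : ℕ → Bool, {i | S i = true}.Infinite → (∀ i, S i = true → N₀ i = true) →
        MGoodB m l S) := by
  refine ⟨?_, ?_, ?_⟩
  · -- (a) closedness
    rw [← isOpen_compl_iff, isOpen_iff_forall_mem_open]
    rintro ⟨S₀, hS₀⟩ hmem
    simp only [Set.mem_compl_iff, Set.mem_setOf_eq] at hmem
    have hsm : StrictMono (enumOf S₀) := Nat.nth_strictMono hS₀
    have hex : ∃ j, ¬ l j * (fN m (enumOf S₀) j + 1) < enumOf S₀ j := by
      by_contra h; push_neg at h
      exact hmem ⟨hsm, fun j => h j⟩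
    obtain ⟨j, hj⟩ := hex
    set b := enumOf S₀ j with hb
    refine ⟨Subtype.val ⁻¹' {f : ℕ → Bool | ∀ i ≤ b, f i = S₀ i}, ?_, ?_, ?_⟩
    · rintro ⟨T, hT⟩ hTV
      simp only [Set.mem_preimage, Set.mem_setOf_eq] at hTV
      simp only [Set.mem_compl_iff, Set.mem_setOf_eq]
      intro hgood
      obtain ⟨-, hall⟩ := hgood
      have hagree : ∀ x ≤ b, ((fun i => S₀ i = true) x ↔ (fun i => T i = true) x) := by
        intro x hx; simp only; rw [hTV x hx]
      have hEq : ∀ i ≤ j, Nat.nth (fun i => S₀ i = true) i = Nat.nth (fun i => T i = true) i :=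
        nth_congr_of_agree hS₀ hT hagree (le_of_eq hb.symm)
      have h1 : enumOf T j = enumOf S₀ j := (hEq j le_rfl).symm
      have h2 : fN m (enumOf T) j = fN m (enumOf S₀) j :=
        fN_congr fun i hi => (hEq i hi.le).symm
      have := hall j
      rw [h1, h2] at this
      exact hj this
    · refine IsOpen.preimage continuous_subtype_val ?_
      have hV : {f : ℕ → Bool | ∀ i ≤ b, f i = S₀ i}
          = ⋂ i ∈ Finset.range (b + 1), {f : ℕ → Bool | f i = S₀ i} := by
        ext f; simp [Nat.lt_succ_iff]
      rw [hV]
      refine isOpen_biInter_finset fun i _ => ?_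
      have h2 : {f : ℕ → Bool | f i = S₀ i} = (fun f : ℕ → Bool => f i) ⁻¹' {S₀ i} := rfl
      rw [h2]
      exact IsOpen.preimage (continuous_apply i) (isOpen_discrete _)
    · intro i _; rfl
  · -- (b)
    intro R hR
    obtain ⟨n, hmono, hmem, hstep⟩ := exists_growth m l hR
    refine ⟨fun i => decide (i ∈ Set.range n), ?_, ?_, ?_⟩
    · have h1 : {i | (fun i => decide (i ∈ Set.range n)) i = true} = Set.range n := by
        ext i; simp
      rw [h1]
      exact Set.infinite_range_of_injective hmono.injective
    · intro i hi
      simp only [decide_eq_true_eq] at hi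
      obtain ⟨k, rfl⟩ := hi
      exact hmem k
    · refine good_of_range m l hml n hmono hstep _ ?_ ?_
      · have h1 : {i | (fun i => decide (i ∈ Set.range n)) i = true} = Set.range n := by
          ext i; simp
        rw [h1]
        exact Set.infinite_range_of_injective hmono.injective
      · intro i hi
        simpa using hi
  · -- (c)
    obtain ⟨n, hmono, -, hstep⟩ := exists_growth m l (Set.infinite_univ (α := ℕ))
    refine ⟨fun i => decide (i ∈ Set.range n), ?_, ?_⟩
    · have h1 : {i | (fun i => decide (i ∈ Set.range n)) i = true} = Set.range n := by
        ext i; simp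
      rw [h1]
      exact Set.infinite_range_of_injective hmono.injective
    · intro S hS hsub
      refine good_of_range m l hml n hmono hstep S hS ?_
      intro i hi
      simpa using hsub i hi

end Gasparis
end
end

section
/- Let N_0 be an infinite subset of ℕ. For infinite subsets N = (n_i) and R = (r_i) of N_0 (increasing enumerations), let G = {(N, R) ∈ [N_0] × [N_0] : for every i_0 ∈ ℕ there exist i > j > i_0 with n_{2i} = r_{2j}}. Then G is a dense G_δ subset of [N_0] × [N_0]. -/
open Filter Topology

open scoped Classical

noncomputable section

namespace Gasparis

variable {X : Type*}

/-! ## STATEMENT 15 -/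


/-- The set `G` of pairs `(N, R)` of infinite subsets of `N₀` such that for every `i₀`
there are `i > j > i₀` with `n_{2i} = r_{2j}`. -/
def Gset (N₀ : ℕ → Bool) : Set (SubsetsOf N₀ × SubsetsOf N₀) :=
  {p | ∀ i₀ : ℕ, ∃ i j : ℕ, i₀ < j ∧ j < i ∧
    enumOf p.1.1 (2 * i - 1) = enumOf p.2.1 (2 * j - 1)}

/-- Sets determined by finitely many coordinates are open in Cantor space. -/
lemma isOpen_determined (n : ℕ) (D : Set (ℕ → Bool))
    (h : ∀ S T : ℕ → Bool, (∀ i < n, S i = T i) → S ∈ D → T ∈ D) : IsOpen D := by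
  classical
  set g : (ℕ → Bool) → (Fin n → Bool) := fun S i => S i with hg
  have hgc : Continuous g := continuous_pi fun i => continuous_apply _
  have hD : D = g ⁻¹' (g '' D) := by
    apply Set.Subset.antisymm (Set.subset_preimage_image g D)
    rintro T ⟨S, hS, hST⟩
    refine h S T (fun i hi => ?_) hS
    have := congrFun hST ⟨i, hi⟩
    simpa [hg] using this
  rw [hD]
  exact (isOpen_discrete _).preimage hgc

lemma nth_eq_iff_of_infinite {p : ℕ → Prop} [DecidablePred p] (hp : (setOf p).Infinite) (k n : ℕ) :
    Nat.nth p k = n ↔ p n ∧ Nat.count p n = k := by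
  constructor
  · rintro rfl
    exact ⟨Nat.nth_mem_of_infinite hp k, Nat.count_nth_of_infinite hp k⟩
  · rintro ⟨hn, rfl⟩
    exact Nat.nth_count hn

/-- cylinder lemma: neighborhoods in Cantor space contain cylinders. -/
lemma exists_cylinder {x : ℕ → Bool} {V : Set (ℕ → Bool)} (hV : V ∈ 𝓝 x) :
    ∃ m : ℕ, ∀ y : ℕ → Bool, (∀ i < m, y i = x i) → y ∈ V := by
  rw [nhds_pi, Filter.mem_pi] at hV
  obtain ⟨I, hIfin, s, hs, hsub⟩ := hV
  refine ⟨hIfin.toFinset.sup id + 1, fun y hy => hsub fun i hi => ?_⟩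
  have hi' : i ≤ hIfin.toFinset.sup id := Finset.le_sup (f := id) (hIfin.mem_toFinset.2 hi)
  have : y i = x i := hy i (Nat.lt_succ_of_le hi')
  rw [this]
  have := hs i
  rwa [nhds_discrete, Filter.mem_pure] at this

lemma count_agree {p q : ℕ → Prop} [DecidablePred p] [DecidablePred q] (t : ℕ) (hagree : ∀ i, t ≤ i → (p i ↔ q i))
    (hc : Nat.count p t = Nat.count q t + 2) :
    ∀ n, t ≤ n → Nat.count p n = Nat.count q n + 2 := by
  intro n hn
  induction n, hn using Nat.le_induction with
  | base => exact hc
  | succ n hn ih =>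
    rw [Nat.count_succ, Nat.count_succ, ih]
    by_cases h : p n
    · simp only [if_pos h, if_pos ((hagree n hn).1 h)]
    · rw [if_neg h, if_neg (fun hq => h ((hagree n hn).2 hq))]

/-- The key combinatorial lemma. -/
lemma key_lemma {p q : ℕ → Prop} [DecidablePred p] [DecidablePred q] (hq : (setOf q).Infinite)
    (t : ℕ) (hagree : ∀ i, t ≤ i → (p i ↔ q i))
    (hc : Nat.count p t = Nat.count q t + 2) (i₀ : ℕ) :
    ∃ i j : ℕ, i₀ < j ∧ j < i ∧ Nat.nth p (2 * i - 1) = Nat.nth q (2 * j - 1) := by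
  set j := i₀ + Nat.count q t + 1 with hj
  set c := 2 * j - 1 with hcdef
  have hcq : Nat.count q t ≤ c := by omega
  set n := Nat.nth q c with hn
  have hqn : q n := Nat.nth_mem_of_infinite hq c
  have hcount : Nat.count q n = c := Nat.count_nth_of_infinite hq c
  have htn : t ≤ n := by
    by_contra hlt
    push_neg at hlt
    have h1 : Nat.count q (n + 1) = c + 1 := by rw [Nat.count_succ, hcount, if_pos hqn]
    have h2 : Nat.count q (n + 1) ≤ Nat.count q t := Nat.count_monotone _ hlt
    omega
  have hpn : p n := (hagree n htn).2 hqn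
  have hcp : Nat.count p n = c + 2 := by rw [count_agree t hagree hc n htn, hcount]
  have hnth : Nat.nth p (c + 2) = n := by rw [← hcp]; exact Nat.nth_count hpn
  refine ⟨j + 1, j, by omega, by omega, ?_⟩
  have h1 : 2 * (j + 1) - 1 = c + 2 := by omega
  have h2 : 2 * j - 1 = c := rfl
  rw [h1, h2, hnth]

/-- Counting elements of the modified set up to `t`. -/
lemma count_construct (b N₀ : ℕ → Bool) (m c t : ℕ) (ψ : ℕ → ℕ)
    (hψmono : StrictMono ψ) (hψm : ∀ k, m ≤ ψ k) (hψt : ∀ k, k < c → ψ k < t)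
    (hmt : m ≤ t) :
    Nat.count (fun i =>
      (if i < m then b i else if i < t then decide (∃ k, k < c ∧ ψ k = i) else N₀ i) = true) t
      = Nat.count (fun i => b i = true) m + c := by
  classical
  rw [Nat.count_eq_card_filter_range, Nat.count_eq_card_filter_range]
  have hset : (Finset.range t).filter (fun i =>
        (if i < m then b i else if i < t then decide (∃ k, k < c ∧ ψ k = i) else N₀ i) = true)
      = ((Finset.range m).filter (fun i => b i = true)) ∪ (Finset.range c).image ψ := by
    ext i
    simp only [Finset.mem_filter, Finset.mem_union, Finset.mem_image, Finset.mem_range]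
    constructor
    · rintro ⟨hit, hval⟩
      by_cases him : i < m
      · rw [if_pos him] at hval
        exact Or.inl ⟨him, hval⟩
      · rw [if_neg him, if_pos hit] at hval
        obtain ⟨k, hk, hki⟩ := of_decide_eq_true hval
        exact Or.inr ⟨k, hk, hki⟩
    · rintro (⟨him, hb⟩ | ⟨k, hk, rfl⟩)
      · exact ⟨lt_of_lt_of_le him hmt, by rw [if_pos him]; exact hb⟩
      · refine ⟨hψt k hk, ?_⟩
        rw [if_neg (by exact Nat.not_lt.2 (hψm k)), if_pos (hψt k hk)]
        exact decide_eq_true ⟨k, hk, rfl⟩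
  rw [hset, Finset.card_union_of_disjoint, Finset.card_image_of_injective _ hψmono.injective,
    Finset.card_range]
  rw [Finset.disjoint_left]
  intro i hi hmem
  obtain ⟨k, hk, rfl⟩ := Finset.mem_image.1 hmem
  have h1 := Finset.mem_range.1 (Finset.mem_filter.1 hi).1
  exact absurd h1 (Nat.not_lt.2 (hψm k))

/-- The construction: modify `S`, `R` beyond `m` to land in `Gset`. -/
lemma exists_extension (N₀ : ℕ → Bool) (hN₀ : {i | N₀ i = true}.Infinite)
    (S R : SubsetsOf N₀) (m : ℕ) :
    ∃ S' R' : SubsetsOf N₀, (∀ i, i < m → S'.1 i = S.1 i) ∧ (∀ i, i < m → R'.1 i = R.1 i) ∧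
      (S', R') ∈ Gset N₀ := by
  classical
  set pN : ℕ → Prop := fun i => N₀ i = true ∧ m ≤ i with hpNdef
  have hpN : (setOf pN).Infinite := by
    have : setOf pN = {i | N₀ i = true} \ Set.Iio m := by
      ext i; simp [hpNdef, Nat.not_lt]; exact Iff.rfl
    rw [this]
    exact hN₀.diff (Set.finite_Iio m)
  set ψ : ℕ → ℕ := Nat.nth pN with hψdef
  have hψmono : StrictMono ψ := Nat.nth_strictMono hpN
  have hψm : ∀ k, m ≤ ψ k := fun k => (Nat.nth_mem_of_infinite hpN k).2
  have hψN : ∀ k, N₀ (ψ k) = true := fun k => (Nat.nth_mem_of_infinite hpN k).1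
  set c₁ := Nat.count (fun i => S.1 i = true) m with hc₁
  set c₂ := Nat.count (fun i => R.1 i = true) m with hc₂
  set t := ψ (c₁ + c₂ + 2) with ht
  have hmt : m ≤ t := hψm _
  have hψt₁ : ∀ k, k < c₂ + 2 → ψ k < t := fun k hk => hψmono (by omega)
  have hψt₂ : ∀ k, k < c₁ → ψ k < t := fun k hk => hψmono (by omega)
  set S' : ℕ → Bool := fun i =>
    if i < m then S.1 i else if i < t then decide (∃ k, k < c₂ + 2 ∧ ψ k = i) else N₀ i
    with hS'def
  set R' : ℕ → Bool := fun i =>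
    if i < m then R.1 i else if i < t then decide (∃ k, k < c₁ ∧ ψ k = i) else N₀ i
    with hR'def
  -- tail values
  have hS'tail : ∀ i, t ≤ i → S' i = N₀ i := by
    intro i hi
    simp only [hS'def]
    rw [if_neg (by omega), if_neg (by omega)]
  have hR'tail : ∀ i, t ≤ i → R' i = N₀ i := by
    intro i hi
    simp only [hR'def]
    rw [if_neg (by omega), if_neg (by omega)]
  -- infinite
  have htail_inf : {i | N₀ i = true ∧ t ≤ i}.Infinite := by
    have : {i | N₀ i = true ∧ t ≤ i} = {i | N₀ i = true} \ Set.Iio t := by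
      ext i; simp [Nat.not_lt]
    rw [this]; exact hN₀.diff (Set.finite_Iio t)
  have hS'inf : {i | S' i = true}.Infinite := by
    refine htail_inf.mono ?_
    rintro i ⟨h1, h2⟩
    simpa [Set.mem_setOf_eq, hS'tail i h2] using h1
  have hR'inf : {i | R' i = true}.Infinite := by
    refine htail_inf.mono ?_
    rintro i ⟨h1, h2⟩
    simpa [Set.mem_setOf_eq, hR'tail i h2] using h1
  -- subset of N₀
  have hS'sub : ∀ i, S' i = true → N₀ i = true := by
    intro i hi
    simp only [hS'def] at hi
    by_cases him : i < m
    · rw [if_pos him] at hi; exact S.2.2 i hi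
    · rw [if_neg him] at hi
      by_cases hit : i < t
      · rw [if_pos hit] at hi
        obtain ⟨k, _, rfl⟩ := of_decide_eq_true hi
        exact hψN k
      · rwa [if_neg hit] at hi
  have hR'sub : ∀ i, R' i = true → N₀ i = true := by
    intro i hi
    simp only [hR'def] at hi
    by_cases him : i < m
    · rw [if_pos him] at hi; exact R.2.2 i hi
    · rw [if_neg him] at hi
      by_cases hit : i < t
      · rw [if_pos hit] at hi
        obtain ⟨k, _, rfl⟩ := of_decide_eq_true hi
        exact hψN k
      · rwa [if_neg hit] at hi
  -- counts
  have hcS : Nat.count (fun i => S' i = true) t = c₁ + (c₂ + 2) := by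
    have h := count_construct S.1 N₀ m (c₂ + 2) t ψ hψmono hψm hψt₁ hmt
    exact h
  have hcR : Nat.count (fun i => R' i = true) t = c₂ + c₁ := by
    have h := count_construct R.1 N₀ m c₁ t ψ hψmono hψm hψt₂ hmt
    exact h
  refine ⟨⟨S', hS'inf, hS'sub⟩, ⟨R', hR'inf, hR'sub⟩, ?_, ?_, ?_⟩
  · intro i hi; simp only [hS'def]; rw [if_pos hi]
  · intro i hi; simp only [hR'def]; rw [if_pos hi]
  · have hkey : ∀ i₀ : ℕ, ∃ i j : ℕ, i₀ < j ∧ j < i ∧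
        Nat.nth (fun i => S' i = true) (2 * i - 1) = Nat.nth (fun i => R' i = true) (2 * j - 1) := by
      intro i₀
      apply key_lemma hR'inf t
      · intro i hi
        show S' i = true ↔ R' i = true
        rw [hS'tail i hi, hR'tail i hi]
      · show Nat.count (fun i => S' i = true) t = Nat.count (fun i => R' i = true) t + 2
        rw [hcS, hcR]
        omega
    intro i₀
    exact hkey i₀

theorem statement15 (N₀ : ℕ → Bool) (hN₀ : {i | N₀ i = true}.Infinite) :
    Dense (Gset N₀) ∧ IsGδ (Gset N₀) := by
  constructor
  · rw [dense_iff_inter_open]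
    rintro U hU ⟨p, hp⟩
    obtain ⟨S, R⟩ := p
    have hUn : U ∈ 𝓝 (S, R) := hU.mem_nhds hp
    rw [mem_nhds_prod_iff] at hUn
    obtain ⟨u, hu, v, hv, huv⟩ := hUn
    rw [show (𝓝 S) = Filter.comap Subtype.val (𝓝 S.1) from nhds_induced _ _] at hu
    obtain ⟨V₁, hV₁, hV₁sub⟩ := Filter.mem_comap.1 hu
    rw [show (𝓝 R) = Filter.comap Subtype.val (𝓝 R.1) from nhds_induced _ _] at hv
    obtain ⟨V₂, hV₂, hV₂sub⟩ := Filter.mem_comap.1 hv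
    obtain ⟨m₁, hm₁⟩ := exists_cylinder hV₁
    obtain ⟨m₂, hm₂⟩ := exists_cylinder hV₂
    obtain ⟨S', R', hS', hR', hG⟩ := exists_extension N₀ hN₀ S R (max m₁ m₂)
    refine ⟨(S', R'), huv ⟨?_, ?_⟩, hG⟩
    · exact hV₁sub (hm₁ S'.1 fun i hi => hS' i (lt_of_lt_of_le hi (le_max_left _ _)))
    · exact hV₂sub (hm₂ R'.1 fun i hi => hR' i (lt_of_lt_of_le hi (le_max_right _ _)))
  · have hrw : Gset N₀ = ⋂ i₀ : ℕ, {p : SubsetsOf N₀ × SubsetsOf N₀ |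
        ∃ i j : ℕ, i₀ < j ∧ j < i ∧ enumOf p.1.1 (2 * i - 1) = enumOf p.2.1 (2 * j - 1)} := by
      ext p
      simp only [Gset, Set.mem_setOf_eq, Set.mem_iInter]
    rw [hrw]
    refine IsGδ.iInter fun i₀ => IsOpen.isGδ ?_
    have hO : {p : SubsetsOf N₀ × SubsetsOf N₀ |
        ∃ i j : ℕ, i₀ < j ∧ j < i ∧ enumOf p.1.1 (2 * i - 1) = enumOf p.2.1 (2 * j - 1)}
        = ⋃ i : ℕ, ⋃ j : ℕ, ⋃ n : ℕ, {p : SubsetsOf N₀ × SubsetsOf N₀ |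
            i₀ < j ∧ j < i ∧ enumOf p.1.1 (2 * i - 1) = n ∧ enumOf p.2.1 (2 * j - 1) = n} := by
      ext p
      simp only [Set.mem_setOf_eq, Set.mem_iUnion]
      constructor
      · rintro ⟨i, j, h1, h2, he⟩
        exact ⟨i, j, enumOf p.2.1 (2 * j - 1), h1, h2, he, rfl⟩
      · rintro ⟨i, j, n, h1, h2, he1, he2⟩
        exact ⟨i, j, h1, h2, he1.trans he2.symm⟩
    rw [hO]
    refine isOpen_iUnion fun i => isOpen_iUnion fun j => isOpen_iUnion fun n => ?_
    by_cases hij : i₀ < j ∧ j < i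
    · have heq : {p : SubsetsOf N₀ × SubsetsOf N₀ |
          i₀ < j ∧ j < i ∧ enumOf p.1.1 (2 * i - 1) = n ∧ enumOf p.2.1 (2 * j - 1) = n}
          = ((fun p : SubsetsOf N₀ × SubsetsOf N₀ => p.1.1) ⁻¹'
              {T : ℕ → Bool | T n = true ∧ Nat.count (fun i => T i = true) n = 2 * i - 1}) ∩
            ((fun p : SubsetsOf N₀ × SubsetsOf N₀ => p.2.1) ⁻¹'
              {T : ℕ → Bool | T n = true ∧ Nat.count (fun i => T i = true) n = 2 * j - 1}) := by
        ext p
        simp only [Set.mem_setOf_eq, Set.mem_inter_iff, Set.mem_preimage, enumOf]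
        rw [nth_eq_iff_of_infinite p.1.2.1, nth_eq_iff_of_infinite p.2.2.1]
        tauto
      rw [heq]
      have hDopen : ∀ k : ℕ, IsOpen {T : ℕ → Bool | T n = true ∧
          Nat.count (fun i => T i = true) n = k} := by
        intro k
        refine isOpen_determined (n + 1) _ ?_
        rintro A B hAB ⟨h1, h2⟩
        refine ⟨(hAB n (Nat.lt_succ_self n)) ▸ h1, ?_⟩
        rw [← h2, Nat.count_eq_card_filter_range, Nat.count_eq_card_filter_range]
        congr 1
        apply Finset.filter_congr
        intro x hx
        rw [hAB x (Nat.lt_succ_of_lt (Finset.mem_range.1 hx))]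
      exact ((hDopen _).preimage (continuous_subtype_val.comp continuous_fst)).inter
        ((hDopen _).preimage (continuous_subtype_val.comp continuous_snd))
    · have heq : {p : SubsetsOf N₀ × SubsetsOf N₀ |
          i₀ < j ∧ j < i ∧ enumOf p.1.1 (2 * i - 1) = n ∧ enumOf p.2.1 (2 * j - 1) = n}
          = (∅ : Set (SubsetsOf N₀ × SubsetsOf N₀)) := by
        ext p
        simp only [Set.mem_setOf_eq, Set.mem_empty_iff_false, iff_false]
        rintro ⟨h1, h2, -⟩
        exact hij ⟨h1, h2⟩
      rw [heq]
      exact isOpen_empty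


end Gasparis
end
end
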